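/- arXiv:1608.01973 — 2 statements merged into one kernel-verified Lean document; each statement's English description precedes it below -/
import Mathlib

section
/- The minor minimal almost nonplanar graphs are exactly K_5 - e and K_{3,3} - e. -/
open SimpleGraph

def K5 : SimpleGraph (Fin 5) := ⊤

def K33 : SimpleGraph (Fin 3 ⊕ Fin 3) := completeBipartiteGraph (Fin 3) (Fin 3)

/-- `H` is a minor of `G`: branch-set (model) definition. -/
def IsMinor {W V : Type} (H : SimpleGraph W) (G : SimpleGraph V) : Prop :=
  ∃ f : W → Set V,
    (∀ w, (f w).Nonempty) ∧
    (∀ w, (G.induce (f w)).Connected) ∧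
    (Pairwise fun w₁ w₂ => Disjoint (f w₁) (f w₂)) ∧
    (∀ w₁ w₂, H.Adj w₁ w₂ → ∃ x ∈ f w₁, ∃ y ∈ f w₂, G.Adj x y)

/-- Planarity, via Wagner's theorem: no `K₅` minor and no `K₃,₃` minor. -/
def Planar {V : Type} (G : SimpleGraph V) : Prop :=
  ¬ IsMinor K5 G ∧ ¬ IsMinor K33 G

def ProperMinor {W V : Type} (H : SimpleGraph W) (G : SimpleGraph V) : Prop :=
  IsMinor H G ∧ ¬ IsMinor G H

def MinorMinimal (P : {V : Type} → SimpleGraph V → Prop) {V : Type} (G : SimpleGraph V) : Prop :=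
  P G ∧ ∀ (W : Type) (H : SimpleGraph W), ProperMinor H G → ¬ P H

/-- `G` together with the extra edge `uv`. -/
def AddEdge {V : Type} (G : SimpleGraph V) (u v : V) : SimpleGraph V :=
  G ⊔ fromEdgeSet {s(u, v)}

/-- `G - v`. -/
def DeleteVert {V : Type} (G : SimpleGraph V) (v : V) :=
  G.induce {u | u ≠ v}

/-- Disjoint union of graphs. -/
def DisjUnion {α β : Type} (G : SimpleGraph α) (H : SimpleGraph β) : SimpleGraph (α ⊕ β) :=
  (G.map Sum.inl) ⊔ (H.map Sum.inr)

/-- `K₂ ∪̇ G`: a `K₂` glued to `G` at the vertex `v` (a pendant vertex). -/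
def Pendant {V : Type} (G : SimpleGraph V) (v : V) : SimpleGraph (Option V) :=
  (G.map some) ⊔ fromEdgeSet {s(none, some v)}

/-- The result of subdividing the edge `uv` of `G`, the new vertex being `none`. -/
def SubdivideEdge {V : Type} (G : SimpleGraph V) (u v : V) : SimpleGraph (Option V) :=
  ((G.deleteEdges {s(u, v)}).map some) ⊔
    fromEdgeSet {s(none, some u), s(none, some v)}

/-- The contraction `G/uv` (realized on the same vertex set: `v` is absorbed into `u`
and left as an isolated vertex, which does not affect planarity). -/
def ContractEdge {V : Type} (G : SimpleGraph V) (u v : V) : SimpleGraph V where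
  Adj a b := a ≠ b ∧ ∃ x y, G.Adj x y ∧
    ((x = v ∧ a = u) ∨ (x ≠ v ∧ a = x)) ∧ ((y = v ∧ b = u) ∨ (y ≠ v ∧ b = y))
  symm := by
    constructor
    rintro a b ⟨hab, x, y, hxy, hx, hy⟩
    exact ⟨hab.symm, y, x, hxy.symm, hy, hx⟩
  loopless := by constructor; rintro a ⟨h, -⟩; exact h rfl

/-- `κ(G) ≥ k`: more than `k` vertices and no cut set of fewer than `k` vertices. -/
def VertexConnAtLeast {V : Type} [Fintype V] (G : SimpleGraph V) (k : ℕ) : Prop :=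
  k < Fintype.card V ∧
    ∀ U : Finset V, U.card < k → (G.induce ((↑U : Set V)ᶜ)).Connected

def K5e : SimpleGraph (Fin 5) := K5.deleteEdges {s(0, 1)}

def K33e : SimpleGraph (Fin 3 ⊕ Fin 3) := K33.deleteEdges {s(Sum.inl 0, Sum.inr 0)}

def K2 : SimpleGraph (Fin 2) := ⊤

/-- A planar graph is maximally planar (equivalently, a plane triangulation)
if adding any edge between nonadjacent vertices destroys planarity. -/
def MaximalPlanar {V : Type} (G : SimpleGraph V) : Prop :=
  Planar G ∧ ∀ u v : V, u ≠ v → ¬ G.Adj u v → ¬ Planar (AddEdge G u v)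

/-- Almost nonplanar. -/
def AN {V : Type} (G : SimpleGraph V) : Prop :=
  Planar G ∧ ∃ u v : V, u ≠ v ∧ ¬ G.Adj u v ∧ ¬ Planar (AddEdge G u v)

/-- Completely almost nonplanar. -/
def CAN {V : Type} (G : SimpleGraph V) : Prop :=
  Planar G ∧ (∃ u v : V, u ≠ v ∧ ¬ G.Adj u v) ∧
    ∀ u v : V, u ≠ v → ¬ G.Adj u v → ¬ Planar (AddEdge G u v)

/-- Completely apex: every vertex-deleted subgraph is planar. -/
def CompletelyApex {V : Type} (G : SimpleGraph V) : Prop :=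
  ∀ v : V, Planar (DeleteVert G v)

/-- Incompletely apex. -/
def IA {V : Type} (G : SimpleGraph V) : Prop :=
  ∃ v : V, ¬ Planar (DeleteVert G v)

/-- Incompletely edge apex. -/
def IE {V : Type} (G : SimpleGraph V) : Prop :=
  ∃ e ∈ G.edgeSet, ¬ Planar (G.deleteEdges {e})

/-- Incompletely contraction apex. -/
def IC {V : Type} (G : SimpleGraph V) : Prop :=
  ∃ u v : V, G.Adj u v ∧ ¬ Planar (ContractEdge G u v)

/-- Not apex. -/
def NA {V : Type} (G : SimpleGraph V) : Prop :=
  ∀ v : V, ¬ Planar (DeleteVert G v)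

/-- Not edge apex. -/
def NE {V : Type} (G : SimpleGraph V) : Prop :=
  ∀ e ∈ G.edgeSet, ¬ Planar (G.deleteEdges {e})

/-- Edge apex: some edge deletion (or the graph itself) is planar. -/
def EdgeApex {V : Type} (G : SimpleGraph V) : Prop :=
  Planar G ∨ ∃ e ∈ G.edgeSet, Planar (G.deleteEdges {e})



variable {V W U : Type}

lemma singleton_connected (G : SimpleGraph V) (x : V) : (G.induce {x}).Connected := by
  rw [SimpleGraph.connected_iff]
  refine ⟨fun a b => ?_, ⟨⟨x, rfl⟩⟩⟩
  have : a = b := Subtype.ext (a.2.trans b.2.symm)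
  subst this; rfl

lemma minor_of_injAdj {H : SimpleGraph W} {G : SimpleGraph V} (σ : W → V)
    (hinj : Function.Injective σ) (hadj : ∀ a b, H.Adj a b → G.Adj (σ a) (σ b)) :
    IsMinor H G := by
  refine ⟨fun w => {σ w}, fun w => ⟨σ w, rfl⟩, fun w => singleton_connected G (σ w), ?_, ?_⟩
  · intro a b hab
    simp only [Set.disjoint_singleton_left, Set.mem_singleton_iff]
    exact fun h => hab (hinj h)
  · intro a b hab
    exact ⟨σ a, rfl, σ b, rfl, hadj a b hab⟩

lemma exists_inj_of_isMinor {H : SimpleGraph W} {G : SimpleGraph V} (h : IsMinor H G) :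
    ∃ r : W → V, Function.Injective r := by
  obtain ⟨f, h1, _, h3, _⟩ := h
  refine ⟨fun w => (h1 w).choose, fun a b hab => ?_⟩
  by_contra hne
  have ha := (h1 a).choose_spec
  have hb := (h1 b).choose_spec
  rw [show (h1 a).choose = (h1 b).choose from hab] at ha
  exact Set.disjoint_left.mp (h3 hne) ha hb

lemma reach_induce_mono (G : SimpleGraph V) {s t : Set V} (hst : s ⊆ t) {a b : s}
    (h : (G.induce s).Reachable a b) :
    (G.induce t).Reachable ⟨a.1, hst a.2⟩ ⟨b.1, hst b.2⟩ := by
  have := h.map (G.induceHomOfLE hst).toHom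
  convert this using 2 <;> rfl

lemma isMinor_trans {A : SimpleGraph U} {B : SimpleGraph W} {C : SimpleGraph V}
    (hAB : IsMinor A B) (hBC : IsMinor B C) : IsMinor A C := by
  obtain ⟨f, f1, f2, f3, f4⟩ := hAB
  obtain ⟨g, g1, g2, g3, g4⟩ := hBC
  refine ⟨fun a => ⋃ b ∈ f a, g b, ?_, ?_, ?_, ?_⟩
  · intro a
    obtain ⟨b, hb⟩ := f1 a
    obtain ⟨x, hx⟩ := g1 b
    exact ⟨x, Set.mem_biUnion hb hx⟩
  · intro a
    -- connectivity of the union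
    obtain ⟨b0, hb0⟩ := f1 a
    obtain ⟨u0, hu0⟩ := g1 b0
    have key : ∀ (p q : {x // x ∈ f a}) (w : (B.induce (f a)).Walk p q),
        ∀ (x : V) (hx : x ∈ g p.1) (y : V) (hy : y ∈ g q.1),
        (C.induce (⋃ b ∈ f a, g b)).Reachable
          ⟨x, Set.mem_biUnion p.2 hx⟩ ⟨y, Set.mem_biUnion q.2 hy⟩ := by
      intro p q w
      induction w with
      | @nil pp =>
        intro x hx y hy
        have := (g2 pp.1).preconnected ⟨x, hx⟩ ⟨y, hy⟩
        exact reach_induce_mono C (fun z hz => Set.mem_biUnion pp.2 hz) this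
      | @cons pp m qq hadj w ih =>
        intro x hx y hy
        have hBadj : B.Adj pp.1 m.1 := hadj
        obtain ⟨x1, hx1, y1, hy1, hC⟩ := g4 _ _ hBadj
        have r1 : (C.induce (⋃ b ∈ f a, g b)).Reachable
            ⟨x, Set.mem_biUnion pp.2 hx⟩ ⟨x1, Set.mem_biUnion pp.2 hx1⟩ := by
          have := (g2 pp.1).preconnected ⟨x, hx⟩ ⟨x1, hx1⟩
          exact reach_induce_mono C (fun z hz => Set.mem_biUnion pp.2 hz) this
        have r2 : (C.induce (⋃ b ∈ f a, g b)).Reachable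
            ⟨x1, Set.mem_biUnion pp.2 hx1⟩ ⟨y1, Set.mem_biUnion m.2 hy1⟩ :=
          SimpleGraph.Adj.reachable (by exact hC)
        exact (r1.trans r2).trans (ih y1 hy1 y hy)
    rw [SimpleGraph.connected_iff]
    constructor
    · rintro ⟨x, hx⟩ ⟨y, hy⟩
      obtain ⟨bx, hbx, hxg⟩ := Set.mem_iUnion₂.mp hx
      obtain ⟨by', hby, hyg⟩ := Set.mem_iUnion₂.mp hy
      obtain ⟨w⟩ := (f2 a).preconnected ⟨bx, hbx⟩ ⟨by', hby⟩
      exact key _ _ w x hxg y hyg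
    · exact ⟨⟨u0, Set.mem_biUnion hb0 hu0⟩⟩
  · intro a b hab
    rw [Set.disjoint_left]
    rintro x hx hx'
    obtain ⟨ba, hba, hga⟩ := Set.mem_iUnion₂.mp hx
    obtain ⟨bb, hbb, hgb⟩ := Set.mem_iUnion₂.mp hx'
    have hbab : ba ≠ bb := by
      rintro rfl
      exact Set.disjoint_left.mp (f3 hab) hba hbb
    exact Set.disjoint_left.mp (g3 hbab) hga hgb
  · intro a b hab
    obtain ⟨p, hp, q, hq, hBadj⟩ := f4 a b hab
    obtain ⟨x, hx, y, hy, hC⟩ := g4 p q hBadj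
    exact ⟨x, Set.mem_biUnion hp hx, y, Set.mem_biUnion hq hy, hC⟩

lemma singleton_model {H : SimpleGraph W} {G : SimpleGraph V} [Fintype V] [Fintype W]
    (h : IsMinor H G) (hc : Fintype.card V ≤ Fintype.card W) :
    ∃ σ : W ≃ V, ∀ a b, H.Adj a b → G.Adj (σ a) (σ b) := by
  obtain ⟨f, h1, h2, h3, h4⟩ := h
  have hr : ∀ w, (f w).Nonempty := h1
  set r : W → V := fun w => (h1 w).choose with hrdef
  have hrmem : ∀ w, r w ∈ f w := fun w => (h1 w).choose_spec
  have hinj : Function.Injective r := by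
    intro a b hab
    by_contra hne
    have ha := hrmem a
    rw [hab] at ha
    exact Set.disjoint_left.mp (h3 hne) ha (hrmem b)
  have hcc : Fintype.card W = Fintype.card V :=
    le_antisymm (Fintype.card_le_of_injective r hinj) hc
  have hbij : Function.Bijective r :=
    (Fintype.bijective_iff_injective_and_card r).mpr ⟨hinj, hcc⟩
  have hsing : ∀ w, ∀ x ∈ f w, x = r w := by
    intro w x hx
    obtain ⟨w', rfl⟩ := hbij.surjective x
    rcases eq_or_ne w' w with rfl | hne
    · rfl
    · exact absurd hx (Set.disjoint_left.mp (h3 hne) (hrmem w'))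
  refine ⟨Equiv.ofBijective r hbij, fun a b hab => ?_⟩
  obtain ⟨x, hx, y, hy, hadj⟩ := h4 a b hab
  rw [hsing a x hx, hsing b y hy] at hadj
  exact hadj


lemma perm_adj_reflect [Finite V] (G : SimpleGraph V) (ρ : Equiv.Perm V)
    (h : ∀ a b, G.Adj a b → G.Adj (ρ a) (ρ b)) :
    ∀ a b, G.Adj (ρ a) (ρ b) → G.Adj a b := by
  have hiter : ∀ (n : ℕ) (a b : V), G.Adj a b → G.Adj ((ρ ^ n) a) ((ρ ^ n) b) := by
    intro n
    induction n with
    | zero => simp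
    | succ n ih =>
      intro a b hab
      have := h _ _ (ih a b hab)
      simpa [pow_succ', Equiv.Perm.mul_apply] using this
  intro a b hab
  have hn : 0 < orderOf ρ := by
    have : Finite (Equiv.Perm V) := by infer_instance
    exact orderOf_pos ρ
  have := hiter (orderOf ρ - 1) _ _ hab
  have hpow : ∀ x : V, (ρ ^ (orderOf ρ - 1)) (ρ x) = x := by
    intro x
    have : (ρ ^ (orderOf ρ - 1)) (ρ x) = (ρ ^ (orderOf ρ - 1) * ρ) x := rfl
    rw [this, ← pow_succ, Nat.sub_add_cancel hn, pow_orderOf_eq_one]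
    rfl
  rwa [hpow, hpow] at this

lemma iso_of_mutual_minor {H : SimpleGraph W} {G : SimpleGraph V} [Fintype V] [Fintype W]
    (h1 : IsMinor H G) (h2 : IsMinor G H) : Nonempty (G ≃g H) := by
  obtain ⟨r1, hr1⟩ := exists_inj_of_isMinor h1
  obtain ⟨r2, hr2⟩ := exists_inj_of_isMinor h2
  have hc1 : Fintype.card W ≤ Fintype.card V := Fintype.card_le_of_injective r1 hr1
  have hc2 : Fintype.card V ≤ Fintype.card W := Fintype.card_le_of_injective r2 hr2
  obtain ⟨σ, hσ⟩ := singleton_model h1 hc2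
  obtain ⟨τ, hτ⟩ := singleton_model h2 hc1
  have hρ : ∀ a b, G.Adj a b → G.Adj ((τ.trans σ) a) ((τ.trans σ) b) := by
    intro a b hab
    exact hσ _ _ (hτ _ _ hab)
  refine ⟨⟨τ, ?_⟩⟩
  intro a b
  constructor
  · intro hab
    exact perm_adj_reflect G (τ.trans σ) hρ a b (hσ _ _ hab)
  · exact hτ a b

open Finset in
lemma pairs_count_le {H : SimpleGraph W} {G : SimpleGraph V} [Fintype V] [Fintype W]
    [DecidableRel H.Adj] [DecidableRel G.Adj] (h : IsMinor H G) :
    (univ.filter fun p : W × W => H.Adj p.1 p.2).card ≤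
      (univ.filter fun p : V × V => G.Adj p.1 p.2).card := by
  classical
  obtain ⟨f, h1, h2, h3, h4⟩ := h
  choose x hx y hy hadj using h4
  rcases isEmpty_or_nonempty V with hV | hV
  · rcases isEmpty_or_nonempty W with hW | hW
    · simp
    · exact isEmptyElim ((h1 (Classical.arbitrary W)).choose)
  have : Inhabited V := Classical.inhabited_of_nonempty hV
  refine Finset.card_le_card_of_injOn
    (fun p => if hp : H.Adj p.1 p.2 then (x p.1 p.2 hp, y p.1 p.2 hp) else default) ?_ ?_
  · intro p hp
    simp only [Finset.mem_coe, mem_filter, mem_univ, true_and] at hp ⊢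
    rw [dif_pos hp]
    exact hadj _ _ hp
  · intro p hp q hq heq
    simp only [mem_filter, mem_univ, true_and, coe_filter, Set.mem_setOf_eq] at hp hq
    simp only [dif_pos hp, dif_pos hq] at heq
    have e1 := congrArg Prod.fst heq
    have e2 := congrArg Prod.snd heq
    simp only at e1 e2
    have hp1 : p.1 = q.1 := by
      by_contra hne
      have := hx p.1 p.2 hp
      rw [e1] at this
      exact Set.disjoint_left.mp (h3 hne) this (hx q.1 q.2 hq)
    have hp2 : p.2 = q.2 := by
      by_contra hne
      have := hy p.1 p.2 hp
      rw [e2] at this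
      exact Set.disjoint_left.mp (h3 hne) this (hy q.1 q.2 hq)
    exact Prod.ext hp1 hp2


instance : DecidableRel K5.Adj := fun a b => decidable_of_iff (a ≠ b) (by simp [K5])

instance : DecidableRel K33.Adj := fun a b =>
  decidable_of_iff (a.isLeft ∧ b.isRight ∨ a.isRight ∧ b.isLeft) (by simp only [K33, completeBipartiteGraph_adj])

instance : DecidableRel K5e.Adj := fun a b =>
  decidable_of_iff (a ≠ b ∧ s(a, b) ≠ s((0 : Fin 5), 1)) (by simp only [K5e, K5, SimpleGraph.deleteEdges_adj, SimpleGraph.top_adj, Set.mem_singleton_iff])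

instance : DecidableRel K33e.Adj := fun a b =>
  decidable_of_iff (K33.Adj a b ∧ s(a, b) ≠ s(Sum.inl (0 : Fin 3), Sum.inr (0 : Fin 3)))
    (by simp only [K33e, SimpleGraph.deleteEdges_adj, Set.mem_singleton_iff])

open Finset in
example : (univ.filter fun p : Fin 5 × Fin 5 => K5.Adj p.1 p.2).card = 20 := by decide
open Finset in
example : (univ.filter fun p : Fin 5 × Fin 5 => K5e.Adj p.1 p.2).card = 18 := by decide
open Finset in
example : (univ.filter fun p : (Fin 3 ⊕ Fin 3) × (Fin 3 ⊕ Fin 3) => K33.Adj p.1 p.2).card = 18 := by decide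
open Finset in
example : (univ.filter fun p : (Fin 3 ⊕ Fin 3) × (Fin 3 ⊕ Fin 3) => K33e.Adj p.1 p.2).card = 16 := by decide

def sig5 (a b : Fin 5) : Equiv.Perm (Fin 5) :=
  (Equiv.swap 1 ((Equiv.swap 0 a).symm b)).trans (Equiv.swap 0 a)

lemma sig5_adj : ∀ a b : Fin 5, a ≠ b → ∀ i j, K5e.Adj i j →
    (K5.Adj (sig5 a b i) (sig5 a b j) ∧ s(sig5 a b i, sig5 a b j) ≠ s(a, b)) := by decide

def sig33 : (Fin 3 ⊕ Fin 3) → (Fin 3 ⊕ Fin 3) → Equiv.Perm (Fin 3 ⊕ Fin 3)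
  | Sum.inl i, Sum.inr j => Equiv.sumCongr (Equiv.swap 0 i) (Equiv.swap 0 j)
  | Sum.inr i, Sum.inl j =>
      (Equiv.sumComm (Fin 3) (Fin 3)).trans (Equiv.sumCongr (Equiv.swap 0 j) (Equiv.swap 0 i))
  | _, _ => 1

lemma sig33_adj : ∀ w1 w2, K33.Adj w1 w2 → ∀ i j, K33e.Adj i j →
    (K33.Adj (sig33 w1 w2 i) (sig33 w1 w2 j) ∧
      s(sig33 w1 w2 i, sig33 w1 w2 j) ≠ s(w1, w2)) := by decide



lemma addEdge_adj (G : SimpleGraph V) (u v a b : V) :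
    (AddEdge G u v).Adj a b ↔ G.Adj a b ∨ (a ≠ b ∧ s(a, b) = s(u, v)) := by
  simp only [AddEdge, SimpleGraph.sup_adj, SimpleGraph.fromEdgeSet_adj,
    Set.mem_singleton_iff]
  tauto

lemma induce_addEdge_eq {G : SimpleGraph V} {u v : V} {s : Set V}
    (h : ¬(u ∈ s ∧ v ∈ s)) : (AddEdge G u v).induce s = G.induce s := by
  ext a b
  show (AddEdge G u v).Adj a.1 b.1 ↔ G.Adj a.1 b.1
  rw [addEdge_adj]
  constructor
  · rintro (hG | ⟨hne, heq⟩)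
    · exact hG
    · rcases Sym2.eq_iff.mp heq with ⟨rfl, rfl⟩ | ⟨rfl, rfl⟩
      · exact absurd ⟨a.2, b.2⟩ h
      · exact absurd ⟨b.2, a.2⟩ h
  · exact Or.inl

lemma split_of_not_connected {G : SimpleGraph V} {u v : V} {B : Set V}
    (hu : u ∈ B) (hv : v ∈ B)
    (hconn : ((AddEdge G u v).induce B).Connected)
    (hnc : ¬(G.induce B).Connected) :
    ∃ P Q : Set V, u ∈ P ∧ v ∈ Q ∧ P ∪ Q = B ∧ Disjoint P Q ∧
      (G.induce P).Connected ∧ (G.induce Q).Connected := by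
  set P : Set V := {x | ∃ h : x ∈ B, (G.induce B).Reachable ⟨u, hu⟩ ⟨x, h⟩} with hP
  set Q : Set V := {x | ∃ h : x ∈ B, (G.induce B).Reachable ⟨v, hv⟩ ⟨x, h⟩} with hQ
  have hPB : P ⊆ B := fun x hx => hx.1
  have hQB : Q ⊆ B := fun x hx => hx.1
  have huP : u ∈ P := ⟨hu, SimpleGraph.Reachable.refl _⟩
  have hvQ : v ∈ Q := ⟨hv, SimpleGraph.Reachable.refl _⟩
  -- connectivity of reachability classes
  have hcomp : ∀ (r : V) (hr : r ∈ B)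
      (R : Set V), R = {x | ∃ h : x ∈ B, (G.induce B).Reachable ⟨r, hr⟩ ⟨x, h⟩} →
      (G.induce R).Connected := by
    intro r hr R hR
    have hrR : r ∈ R := by rw [hR]; exact ⟨hr, SimpleGraph.Reachable.refl _⟩
    have key : ∀ (p q : {x // x ∈ B}) (w : (G.induce B).Walk p q) (hp : p.1 ∈ R),
        ∃ hq : q.1 ∈ R, (G.induce R).Reachable ⟨p.1, hp⟩ ⟨q.1, hq⟩ := by
      intro p q w
      induction w with
      | nil => exact fun hp => ⟨hp, SimpleGraph.Reachable.refl _⟩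
      | @cons pp m qq hadj w ih =>
        intro hp
        have hG : G.Adj pp.1 m.1 := hadj
        have hm : m.1 ∈ R := by
          rw [hR]
          rw [hR] at hp
          obtain ⟨hpB, hreach⟩ := hp
          refine ⟨m.2, ?_⟩
          have : (G.induce B).Reachable ⟨pp.1, hpB⟩ ⟨m.1, m.2⟩ :=
            SimpleGraph.Adj.reachable (by exact hG)
          exact (by simpa using hreach : (G.induce B).Reachable ⟨r, hr⟩ ⟨pp.1, hpB⟩).trans this
        obtain ⟨hq, hrest⟩ := ih hm
        refine ⟨hq, SimpleGraph.Reachable.trans (SimpleGraph.Adj.reachable (by exact hG)) hrest⟩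
    rw [SimpleGraph.connected_iff]
    refine ⟨?_, ⟨⟨r, hrR⟩⟩⟩
    have hfromr : ∀ (x : V) (hx : x ∈ R), (G.induce R).Reachable ⟨r, hrR⟩ ⟨x, hx⟩ := by
      intro x hx
      have hx' := hx
      rw [hR] at hx'
      obtain ⟨hxB, hreach⟩ := hx'
      obtain ⟨w⟩ := hreach
      obtain ⟨hq, hre⟩ := key _ _ w hrR
      exact (by exact hre : (G.induce R).Reachable ⟨r, hrR⟩ ⟨x, hq⟩)
    rintro ⟨x, hx⟩ ⟨y, hy⟩
    exact (hfromr x hx).symm.trans (hfromr y hy)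
  have hPconn := hcomp u hu P hP
  have hQconn := hcomp v hv Q hQ
  -- dichotomy
  have hdich : ∀ x ∈ B, x ∈ P ∨ x ∈ Q := by
    have key : ∀ (p q : {x // x ∈ B}) (w : ((AddEdge G u v).induce B).Walk p q),
        (q.1 ∈ P ∨ q.1 ∈ Q) → (p.1 ∈ P ∨ p.1 ∈ Q) := by
      intro p q w
      induction w with
      | nil => exact id
      | @cons pp m qq hadj w ih =>
        intro hq
        have hm := ih hq
        have hadj' : (AddEdge G u v).Adj pp.1 m.1 := hadj
        rw [addEdge_adj] at hadj'
        rcases hadj' with hG | ⟨hne, heq⟩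
        · rcases hm with hmP | hmQ
          · left
            obtain ⟨hmB, hreach⟩ := hmP
            exact ⟨pp.2, hreach.trans (SimpleGraph.Adj.reachable
              (by exact hG.symm : G.Adj m.1 pp.1))⟩
          · right
            obtain ⟨hmB, hreach⟩ := hmQ
            exact ⟨pp.2, hreach.trans (SimpleGraph.Adj.reachable
              (by exact hG.symm : G.Adj m.1 pp.1))⟩
        · rcases Sym2.eq_iff.mp heq with ⟨h1, h2⟩ | ⟨h1, h2⟩
          · left; rw [h1]; exact huP
          · right; rw [h1]; exact hvQ
    intro x hxB
    obtain ⟨w⟩ := hconn.preconnected ⟨x, hxB⟩ ⟨u, hu⟩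
    exact key _ _ w (Or.inl huP)
  have hunion : P ∪ Q = B := by
    apply Set.Subset.antisymm (Set.union_subset hPB hQB)
    intro x hx
    exact (hdich x hx).imp id id
  -- disjointness
  have hdisj : Disjoint P Q := by
    rw [Set.disjoint_left]
    intro x hxP hxQ
    apply hnc
    obtain ⟨hxB, hru⟩ := hxP
    obtain ⟨hxB', hrv⟩ := hxQ
    have huv : (G.induce B).Reachable ⟨u, hu⟩ ⟨v, hv⟩ :=
      hru.trans ((by simpa using hrv : (G.induce B).Reachable ⟨v, hv⟩ ⟨x, hxB⟩).symm)
    rw [SimpleGraph.connected_iff]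
    refine ⟨?_, ⟨⟨u, hu⟩⟩⟩
    rintro ⟨x, hx⟩ ⟨y, hy⟩
    have hx' := hdich x hx
    have hy' := hdich y hy
    have hreach : ∀ (z : V) (hz : z ∈ B), z ∈ P ∨ z ∈ Q →
        (G.induce B).Reachable ⟨u, hu⟩ ⟨z, hz⟩ := by
      rintro z hz (⟨hzB, hr⟩ | ⟨hzB, hr⟩)
      · simpa using hr
      · exact huv.trans (by simpa using hr)
    exact (hreach x hx hx').symm.trans (hreach y hy hy')
  exact ⟨P, Q, huP, hvQ, hunion, hdisj, hPconn, hQconn⟩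

lemma model_minor {K W' : Type} (H' : SimpleGraph K) (G : SimpleGraph V) (σ : K ≃ W')
    (g : W' → Set V)
    (h1 : ∀ w, (g w).Nonempty) (h2 : ∀ w, (G.induce (g w)).Connected)
    (h3 : Pairwise fun a b => Disjoint (g a) (g b))
    (h4 : ∀ i j, H'.Adj i j → ∃ x ∈ g (σ i), ∃ y ∈ g (σ j), G.Adj x y) :
    IsMinor H' G :=
  ⟨fun i => g (σ i), fun i => h1 _, fun i => h2 _,
   fun a b hab => h3 (fun h => hab (σ.injective h)), h4⟩

section K5case
variable {G : SimpleGraph V} {f : Fin 5 → Set V} {w0 i0 : Fin 5} {P Q : Set V}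

lemma caseFull5
    (h1 : ∀ w, (f w).Nonempty)
    (hconnG : ∀ w, w ≠ w0 → (G.induce (f w)).Connected)
    (h3 : Pairwise fun a b => Disjoint (f a) (f b))
    (hwit : ∀ p q : Fin 5, p ≠ q → p ≠ w0 → q ≠ w0 → ∃ x ∈ f p, ∃ y ∈ f q, G.Adj x y)
    (hPc : (G.induce P).Connected) (hPf : P ⊆ f w0) (hPne : P.Nonempty)
    (hatt : ∀ i, i ≠ w0 → ∃ x ∈ f i, ∃ y ∈ P, G.Adj x y) :
    IsMinor K5 G := by
  classical
  set g : Fin 5 → Set V := fun w => if w = w0 then P else f w with hg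
  have gw0 : g w0 = P := if_pos rfl
  have gother : ∀ w, w ≠ w0 → g w = f w := fun w hw => if_neg hw
  refine ⟨g, ?_, ?_, ?_, ?_⟩
  · intro w
    rcases eq_or_ne w w0 with rfl | hw
    · rw [gw0]; exact hPne
    · rw [gother w hw]; exact h1 w
  · intro w
    rcases eq_or_ne w w0 with rfl | hw
    · rw [gw0]; exact hPc
    · rw [gother w hw]; exact hconnG w hw
  · intro a b hab
    rcases eq_or_ne a w0 with rfl | ha
    · rw [gw0, gother b hab.symm]; exact ((h3 hab).mono_left hPf)
    · rcases eq_or_ne b w0 with rfl | hb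
      · rw [gw0, gother a ha]; exact ((h3 hab).mono_right hPf)
      · rw [gother a ha, gother b hb]; exact h3 hab
  · intro a b hab
    have hab' : a ≠ b := by simpa [K5] using hab
    rcases eq_or_ne a w0 with rfl | ha
    · obtain ⟨x, hx, y, hy, hxy⟩ := hatt b hab'.symm
      exact ⟨y, gw0 ▸ hy, x, (gother b hab'.symm) ▸ hx, hxy.symm⟩
    · rcases eq_or_ne b w0 with rfl | hb
      · obtain ⟨x, hx, y, hy, hxy⟩ := hatt a ha
        exact ⟨x, (gother a ha) ▸ hx, y, gw0 ▸ hy, hxy⟩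
      · obtain ⟨x, hx, y, hy, hxy⟩ := hwit a b hab' ha hb
        exact ⟨x, (gother a ha) ▸ hx, y, (gother b hb) ▸ hy, hxy⟩

lemma case31
    (hne : i0 ≠ w0)
    (h1 : ∀ w, (f w).Nonempty)
    (hconnG : ∀ w, w ≠ w0 → (G.induce (f w)).Connected)
    (h3 : Pairwise fun a b => Disjoint (f a) (f b))
    (hwit : ∀ p q : Fin 5, p ≠ q → p ≠ w0 → q ≠ w0 → ∃ x ∈ f p, ∃ y ∈ f q, G.Adj x y)
    (hPc : (G.induce P).Connected) (hQc : (G.induce Q).Connected)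
    (hPf : P ⊆ f w0) (hQf : Q ⊆ f w0) (hPQ : Disjoint P Q) (hPne : P.Nonempty)
    (hattP : ∀ i, i ≠ w0 → i ≠ i0 → ∃ x ∈ f i, ∃ y ∈ P, G.Adj x y)
    (hattQ : ∃ x ∈ f i0, ∃ y ∈ Q, G.Adj x y) :
    IsMinor K5e G := by
  classical
  set g : Fin 5 → Set V := fun w => if w = w0 then P else if w = i0 then f i0 ∪ Q else f w
    with hg
  have gw0 : g w0 = P := by simp only [hg, if_pos rfl]
  have gi0 : g i0 = f i0 ∪ Q := by simp [hg, hne]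
  have gother : ∀ w, w ≠ w0 → w ≠ i0 → g w = f w := fun w h h' => by
    simp only [hg, if_neg h, if_neg h']
  refine model_minor K5e G (sig5 w0 i0) g ?_ ?_ ?_ ?_
  · intro w
    rcases eq_or_ne w w0 with rfl | hw
    · rw [gw0]; exact hPne
    · rcases eq_or_ne w i0 with rfl | hw'
      · rw [gi0]; exact (h1 w).mono Set.subset_union_left
      · rw [gother w hw hw']; exact h1 w
  · intro w
    rcases eq_or_ne w w0 with rfl | hw
    · rw [gw0]; exact hPc
    · rcases eq_or_ne w i0 with rfl | hw'
      · rw [gi0]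
        obtain ⟨x, hx, y, hy, hxy⟩ := hattQ
        exact SimpleGraph.connected_induce_union (hconnG w hne).preconnected hQc.preconnected hx hy hxy
      · rw [gother w hw hw']; exact hconnG w hw
  · have key : ∀ a b, a ≠ b → Disjoint (g a) (g b) := by
      intro a b hab
      rcases eq_or_ne a w0 with rfl | ha
      · rw [gw0]
        rcases eq_or_ne b i0 with rfl | hb'
        · rw [gi0]
          exact Set.disjoint_union_right.mpr ⟨(h3 hab).mono_left hPf, hPQ⟩
        · rw [gother b hab.symm hb']; exact (h3 hab).mono_left hPf
      · rcases eq_or_ne b w0 with rfl | hb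
        · rw [gw0]
          rcases eq_or_ne a i0 with rfl | ha'
          · rw [gi0]
            exact Set.disjoint_union_left.mpr ⟨(h3 hab).mono_right hPf, hPQ.symm⟩
          · rw [gother a hab ha']; exact (h3 hab).mono_right hPf
        · rcases eq_or_ne a i0 with rfl | ha'
          · rw [gi0, gother b hb hab.symm]
            exact Set.disjoint_union_left.mpr ⟨h3 hab, (h3 hb).symm.mono_left hQf⟩
          · rcases eq_or_ne b i0 with rfl | hb'
            · rw [gi0, gother a ha ha']
              exact Set.disjoint_union_right.mpr ⟨h3 hab, (h3 ha).mono_right hQf⟩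
            · rw [gother a ha ha', gother b hb hb']; exact h3 hab
    exact fun a b hab => key a b hab
  · have main : ∀ p q, p ≠ q → s(p, q) ≠ s(w0, i0) → ∃ x ∈ g p, ∃ y ∈ g q, G.Adj x y := by
      intro p q hpq hs
      rcases eq_or_ne p w0 with rfl | hpw0
      · have hqi0 : q ≠ i0 := fun h => hs (by rw [h])
        obtain ⟨x, hx, y, hy, hxy⟩ := hattP q hpq.symm hqi0
        exact ⟨y, gw0 ▸ hy, x, (gother q hpq.symm hqi0) ▸ hx, hxy.symm⟩
      · rcases eq_or_ne q w0 with rfl | hqw0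
        · have hpi0 : p ≠ i0 := fun h => hs (by rw [h]; exact Sym2.eq_swap)
          obtain ⟨x, hx, y, hy, hxy⟩ := hattP p hpq hpi0
          exact ⟨x, (gother p hpq hpi0) ▸ hx, y, gw0 ▸ hy, hxy⟩
        · rcases eq_or_ne p i0 with rfl | hpi0
          · obtain ⟨x, hx, y, hy, hxy⟩ := hwit p q hpq hpw0 hqw0
            exact ⟨x, gi0 ▸ Set.mem_union_left _ hx, y, (gother q hqw0 hpq.symm) ▸ hy, hxy⟩
          · rcases eq_or_ne q i0 with rfl | hqi0
            · obtain ⟨x, hx, y, hy, hxy⟩ := hwit p q hpq hpw0 hqw0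
              exact ⟨x, (gother p hpw0 hpi0) ▸ hx, y, gi0 ▸ Set.mem_union_left _ hy, hxy⟩
            · obtain ⟨x, hx, y, hy, hxy⟩ := hwit p q hpq hpw0 hqw0
              exact ⟨x, (gother p hpw0 hpi0) ▸ hx, y, (gother q hqw0 hqi0) ▸ hy, hxy⟩
    intro i j hij
    obtain ⟨hK, hs⟩ := sig5_adj w0 i0 hne.symm i j hij
    exact main _ _ (by simpa [K5] using hK) hs
end K5case

section K22
variable {G : SimpleGraph V} {f : Fin 5 → Set V} {w0 a b c d : Fin 5} {P Q : Set V}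

lemma case22
    (hconnG : ∀ w, w ≠ w0 → (G.induce (f w)).Connected)
    (h1 : ∀ w, (f w).Nonempty)
    (h3 : Pairwise fun x y => Disjoint (f x) (f y))
    (hwit : ∀ p q : Fin 5, p ≠ q → p ≠ w0 → q ≠ w0 → ∃ x ∈ f p, ∃ y ∈ f q, G.Adj x y)
    (hPc : (G.induce P).Connected) (hQc : (G.induce Q).Connected)
    (hPf : P ⊆ f w0) (hQf : Q ⊆ f w0) (hPQ : Disjoint P Q)
    (haw : a ≠ w0) (hbw : b ≠ w0) (hcw : c ≠ w0) (hdw : d ≠ w0)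
    (hab : a ≠ b) (hac : a ≠ c) (had : a ≠ d) (hbc : b ≠ c) (hbd : b ≠ d) (hcd : c ≠ d)
    (hPa : ∃ x ∈ f a, ∃ y ∈ P, G.Adj x y)
    (hPb : ∃ x ∈ f b, ∃ y ∈ P, G.Adj x y)
    (hQc' : ∃ x ∈ f c, ∃ y ∈ Q, G.Adj x y)
    (hQd' : ∃ x ∈ f d, ∃ y ∈ Q, G.Adj x y) :
    IsMinor K33e G := by
  classical
  obtain ⟨xa, hxa, ya, hya, haa⟩ := hPa
  obtain ⟨xb, hxb, yb, hyb, hbb⟩ := hPb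
  obtain ⟨xc, hxc, yc, hyc, hcc⟩ := hQc'
  obtain ⟨xd, hxd, yd, hyd, hdd⟩ := hQd'
  obtain ⟨uca, hca1, vca, hca2, hca⟩ := hwit c a hac.symm hcw haw
  obtain ⟨ucb, hcb1, vcb, hcb2, hcb⟩ := hwit c b hbc.symm hcw hbw
  obtain ⟨uda, hda1, vda, hda2, hda⟩ := hwit d a had.symm hdw haw
  obtain ⟨udb, hdb1, vdb, hdb2, hdb⟩ := hwit d b hbd.symm hdw hbw
  set F : Fin 3 ⊕ Fin 3 → Set V := fun s => Sum.elim
    (fun k : Fin 3 => if k = 0 then P else if k = 1 then f c else f d)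
    (fun k : Fin 3 => if k = 0 then Q else if k = 1 then f a else f b) s with hF
  have e1 : F (Sum.inl 0) = P := by simp [hF]
  have e2 : F (Sum.inl 1) = f c := by simp [hF]
  have e3 : F (Sum.inl 2) = f d := by simp [hF]
  have e4 : F (Sum.inr 0) = Q := by simp [hF]
  have e5 : F (Sum.inr 1) = f a := by simp [hF]
  have e6 : F (Sum.inr 2) = f b := by simp [hF]
  have dPQ : Disjoint P Q := hPQ
  have dPc : Disjoint P (f c) := (h3 (Ne.symm hcw)).mono_left hPf
  have dPd : Disjoint P (f d) := (h3 (Ne.symm hdw)).mono_left hPf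
  have dPa : Disjoint P (f a) := (h3 (Ne.symm haw)).mono_left hPf
  have dPb : Disjoint P (f b) := (h3 (Ne.symm hbw)).mono_left hPf
  have dQc : Disjoint Q (f c) := (h3 (Ne.symm hcw)).mono_left hQf
  have dQd : Disjoint Q (f d) := (h3 (Ne.symm hdw)).mono_left hQf
  have dQa : Disjoint Q (f a) := (h3 (Ne.symm haw)).mono_left hQf
  have dQb : Disjoint Q (f b) := (h3 (Ne.symm hbw)).mono_left hQf
  have dca : Disjoint (f c) (f a) := h3 hac.symm
  have dcb : Disjoint (f c) (f b) := h3 hbc.symm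
  have dcd : Disjoint (f c) (f d) := h3 hcd
  have dda : Disjoint (f d) (f a) := h3 had.symm
  have ddb : Disjoint (f d) (f b) := h3 hbd.symm
  have dba : Disjoint (f b) (f a) := h3 hab.symm
  refine ⟨F, ?_, ?_, ?_, ?_⟩
  · rintro (k | k) <;> fin_cases k <;>
      simp only [e1, e2, e3, e4, e5, e6]
    · exact ⟨ya, hya⟩
    · exact h1 c
    · exact h1 d
    · exact ⟨yc, hyc⟩
    · exact h1 a
    · exact h1 b
  · rintro (k | k) <;> fin_cases k <;>
      simp only [e1, e2, e3, e4, e5, e6]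
    · exact hPc
    · exact hconnG c hcw
    · exact hconnG d hdw
    · exact hQc
    · exact hconnG a haw
    · exact hconnG b hbw
  · rintro (k | k) (l | l) hkl <;> fin_cases k <;> fin_cases l <;>
      simp only [e1, e2, e3, e4, e5, e6] <;>
      first
        | exact absurd rfl hkl
        | assumption
        | (apply Disjoint.symm; assumption)
  · rintro (k | k) (l | l) hkl <;> fin_cases k <;> fin_cases l <;>
      simp only [e1, e2, e3, e4, e5, e6] <;>
      first
        | exact absurd hkl (by decide)
        | exact ⟨ya, hya, xa, hxa, haa.symm⟩
        | exact ⟨yb, hyb, xb, hxb, hbb.symm⟩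
        | exact ⟨xc, hxc, yc, hyc, hcc⟩
        | exact ⟨xd, hxd, yd, hyd, hdd⟩
        | exact ⟨uca, hca1, vca, hca2, hca⟩
        | exact ⟨ucb, hcb1, vcb, hcb2, hcb⟩
        | exact ⟨uda, hda1, vda, hda2, hda⟩
        | exact ⟨udb, hdb1, vdb, hdb2, hdb⟩
        | exact ⟨xa, hxa, ya, hya, haa⟩
        | exact ⟨xb, hxb, yb, hyb, hbb⟩
        | exact ⟨yc, hyc, xc, hxc, hcc.symm⟩
        | exact ⟨yd, hyd, xd, hxd, hdd.symm⟩
        | exact ⟨vca, hca2, uca, hca1, hca.symm⟩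
        | exact ⟨vcb, hcb2, ucb, hcb1, hcb.symm⟩
        | exact ⟨vda, hda2, uda, hda1, hda.symm⟩
        | exact ⟨vdb, hdb2, udb, hdb1, hdb.symm⟩
end K22

lemma memf_unique {W' : Type} {f : W' → Set V} (h3 : Pairwise fun a b => Disjoint (f a) (f b))
    {a b : W'} {x : V} (ha : x ∈ f a) (hb : x ∈ f b) : a = b := by
  by_contra hne
  exact Set.disjoint_left.mp (h3 hne) ha hb

lemma A5 {G : SimpleGraph V} {u v : V}
    (hK5 : ¬IsMinor K5 G)
    (hm : IsMinor K5 (AddEdge G u v)) :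
    IsMinor K5e G ∨ IsMinor K33e G := by
  classical
  obtain ⟨f, h1, h2, h3, h4⟩ := hm
  by_cases hcase : ∃ w0, u ∈ f w0 ∧ v ∈ f w0
  · obtain ⟨w0, huw, hvw⟩ := hcase
    have hwit : ∀ p q : Fin 5, p ≠ q → ∃ x ∈ f p, ∃ y ∈ f q, G.Adj x y := by
      intro p q hpq
      obtain ⟨x, hx, y, hy, hxy⟩ := h4 p q (by simp [K5, hpq])
      rw [addEdge_adj] at hxy
      rcases hxy with hG | ⟨hne, heq⟩
      · exact ⟨x, hx, y, hy, hG⟩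
      · exfalso
        rcases Sym2.eq_iff.mp heq with ⟨rfl, rfl⟩ | ⟨rfl, rfl⟩
        · exact hpq ((memf_unique h3 hx huw).trans (memf_unique h3 hvw hy))
        · exact hpq ((memf_unique h3 hx hvw).trans (memf_unique h3 huw hy))
    have hother : ∀ w, w ≠ w0 → ¬(u ∈ f w ∧ v ∈ f w) := fun w hw ⟨hu', _⟩ =>
      hw (memf_unique h3 hu' huw)
    have hconnG : ∀ w, w ≠ w0 → (G.induce (f w)).Connected := by
      intro w hw
      rw [← induce_addEdge_eq (u := u) (v := v) (hother w hw)]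
      exact h2 w
    by_cases hB : (G.induce (f w0)).Connected
    · exfalso
      apply hK5
      refine ⟨f, h1, ?_, h3, ?_⟩
      · intro w
        rcases eq_or_ne w w0 with rfl | hw
        · exact hB
        · exact hconnG w hw
      · intro p q hpq
        exact hwit p q (by simpa [K5] using hpq)
    · obtain ⟨P, Q, huP, hvQ, hPQu, hPQd, hPc, hQc⟩ :=
        split_of_not_connected huw hvw (h2 w0) hB
      have hPf : P ⊆ f w0 := hPQu ▸ Set.subset_union_left
      have hQf : Q ⊆ f w0 := hPQu ▸ Set.subset_union_right
      -- attachment data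
      have hattex : ∀ i : Fin 5, ∃ x y, i ≠ w0 → (x ∈ f i ∧ y ∈ f w0 ∧ G.Adj x y) := by
        intro i
        by_cases hi : i ≠ w0
        · obtain ⟨x, hx, y, hy, h⟩ := hwit i w0 hi
          exact ⟨x, y, fun _ => ⟨hx, hy, h⟩⟩
        · exact ⟨u, u, fun h => absurd h hi⟩
      choose X Y hXY' using hattex
      have hX : ∀ i, i ≠ w0 → X i ∈ f i := fun i hi => (hXY' i hi).1
      have hY : ∀ i, i ≠ w0 → Y i ∈ f w0 := fun i hi => (hXY' i hi).2.1
      have hXY : ∀ i, i ≠ w0 → G.Adj (X i) (Y i) := fun i hi => (hXY' i hi).2.2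
      have hYPQ : ∀ i, i ≠ w0 → Y i ∈ P ∨ Y i ∈ Q := by
        intro i hi
        have h' := hY i hi
        rw [← hPQu] at h'
        exact h'
      set T : Finset (Fin 5) := (Finset.univ.erase w0).filter (fun i => Y i ∈ P) with hT
      have hTsub : T ⊆ Finset.univ.erase w0 := Finset.filter_subset _ _
      have hmemT : ∀ i, i ∈ T ↔ (i ≠ w0 ∧ Y i ∈ P) := by
        intro i
        simp only [hT, Finset.mem_filter, Finset.mem_erase, Finset.mem_univ, and_true]
      have hmemCo : ∀ i, i ≠ w0 → i ∉ T → Y i ∈ Q := by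
        intro i hi hiT
        rcases hYPQ i hi with h | h
        · exact absurd ((hmemT i).mpr ⟨hi, h⟩) hiT
        · exact h
      by_cases hTall : ∀ i, i ≠ w0 → i ∈ T
      · -- all attach to P : K5 minor of G, contradiction
        exfalso
        apply hK5
        exact caseFull5 h1 hconnG h3 (fun p q h hp hq => hwit p q h) hPc hPf ⟨u, huP⟩
          (fun i hi => ⟨X i, hX i hi, Y i, ((hmemT i).mp (hTall i hi)).2, hXY i hi⟩)
      · by_cases hTnone : ∀ i, i ≠ w0 → i ∉ T
        · exfalso
          apply hK5
          exact caseFull5 h1 hconnG h3 (fun p q h hp hq => hwit p q h) hQc hQf ⟨v, hvQ⟩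
            (fun i hi => ⟨X i, hX i hi, Y i, hmemCo i hi (hTnone i hi), hXY i hi⟩)
        · -- mixed attachments
          obtain ⟨i1, hi1⟩ := not_forall.mp hTnone
          obtain ⟨hi1w, hi1T'⟩ := _root_.not_imp.mp hi1
          have hi1T : i1 ∈ T := not_not.mp hi1T'
          obtain ⟨i2, hi2⟩ := not_forall.mp hTall
          obtain ⟨hi2w, hi2T⟩ := _root_.not_imp.mp hi2
          have hcard4 : (Finset.univ.erase w0).card = 4 := by
            rw [Finset.card_erase_of_mem (Finset.mem_univ w0)]
            simp
          set C := (Finset.univ.erase w0) \ T with hC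
          have hmemC : ∀ i, i ∈ C ↔ (i ≠ w0 ∧ i ∉ T) := by
            intro i
            simp [hC, Finset.mem_sdiff, Finset.mem_erase]
          have hCcard : C.card = 4 - T.card := by
            rw [hC, Finset.card_sdiff_of_subset hTsub, hcard4]
          have hTpos : 0 < T.card := Finset.card_pos.mpr ⟨i1, hi1T⟩
          have hCpos : 0 < C.card := Finset.card_pos.mpr ⟨i2, (hmemC i2).mpr ⟨hi2w, hi2T⟩⟩
          have hTle : T.card ≤ 4 := hcard4 ▸ Finset.card_le_card hTsub
          have h13 : T.card = 1 ∨ T.card = 2 ∨ T.card = 3 := by omega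
          have hYP : ∀ i, i ∈ T → Y i ∈ P := fun i hi => ((hmemT i).mp hi).2
          have hTw : ∀ i, i ∈ T → i ≠ w0 := fun i hi => ((hmemT i).mp hi).1
          rcases h13 with h | h | h
          · -- one attaches to P, three to Q : K5e with roles swapped
            obtain ⟨i0, hTi0⟩ := Finset.card_eq_one.mp h
            have hi0T : i0 ∈ T := by rw [hTi0]; exact Finset.mem_singleton_self i0
            have hi0w : i0 ≠ w0 := hTw i0 hi0T
            left
            refine case31 hi0w h1 hconnG h3 (fun p q hh hp hq => hwit p q hh)
              hQc hPc hQf hPf hPQd.symm ⟨v, hvQ⟩ ?_ ?_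
            · intro i hi hii0
              refine ⟨X i, hX i hi, Y i, hmemCo i hi ?_, hXY i hi⟩
              intro hmem
              rw [hTi0] at hmem
              exact hii0 (Finset.mem_singleton.mp hmem)
            · exact ⟨X i0, hX i0 hi0w, Y i0, hYP i0 hi0T, hXY i0 hi0w⟩
          · -- two and two : K33e
            obtain ⟨a, b, hab, hTab⟩ := Finset.card_eq_two.mp h
            have hCc : C.card = 2 := by omega
            obtain ⟨c, d, hcd, hCcd⟩ := Finset.card_eq_two.mp hCc
            have haT : a ∈ T := by rw [hTab]; simp
            have hbT : b ∈ T := by rw [hTab]; simp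
            have hcC : c ∈ C := by rw [hCcd]; simp
            have hdC : d ∈ C := by rw [hCcd]; simp
            have hcw := ((hmemC c).mp hcC).1
            have hdw := ((hmemC d).mp hdC).1
            have hcT := ((hmemC c).mp hcC).2
            have hdT := ((hmemC d).mp hdC).2
            have haw := hTw a haT
            have hbw := hTw b hbT
            have hac : a ≠ c := fun hh => hcT (hh ▸ haT)
            have had : a ≠ d := fun hh => hdT (hh ▸ haT)
            have hbc : b ≠ c := fun hh => hcT (hh ▸ hbT)
            have hbd : b ≠ d := fun hh => hdT (hh ▸ hbT)
            right
            exact case22 hconnG h1 h3 (fun p q hh hp hq => hwit p q hh) hPc hQc hPf hQf hPQd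
              haw hbw hcw hdw hab hac had hbc hbd hcd
              ⟨X a, hX a haw, Y a, hYP a haT, hXY a haw⟩
              ⟨X b, hX b hbw, Y b, hYP b hbT, hXY b hbw⟩
              ⟨X c, hX c hcw, Y c, hmemCo c hcw hcT, hXY c hcw⟩
              ⟨X d, hX d hdw, Y d, hmemCo d hdw hdT, hXY d hdw⟩
          · -- three attach to P, one to Q
            have hCc : C.card = 1 := by omega
            obtain ⟨i0, hCi0⟩ := Finset.card_eq_one.mp hCc
            have hi0C : i0 ∈ C := by rw [hCi0]; exact Finset.mem_singleton_self i0
            have hi0w := ((hmemC i0).mp hi0C).1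
            have hi0T := ((hmemC i0).mp hi0C).2
            left
            refine case31 hi0w h1 hconnG h3 (fun p q hh hp hq => hwit p q hh)
              hPc hQc hPf hQf hPQd ⟨u, huP⟩ ?_ ?_
            · intro i hi hii0
              have hiT : i ∈ T := by
                by_contra hiT
                have : i ∈ C := (hmemC i).mpr ⟨hi, hiT⟩
                rw [hCi0] at this
                exact hii0 (Finset.mem_singleton.mp this)
              exact ⟨X i, hX i hi, Y i, hYP i hiT, hXY i hi⟩
            · exact ⟨X i0, hX i0 hi0w, Y i0, hmemCo i0 hi0w hi0T, hXY i0 hi0w⟩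
  · -- u, v never in the same branch set
    have hconnG : ∀ w, (G.induce (f w)).Connected := by
      intro w
      rw [← induce_addEdge_eq (u := u) (v := v) (fun hcon => hcase ⟨w, hcon⟩)]
      exact h2 w
    by_cases hall : ∀ p q : Fin 5, p ≠ q → ∃ x ∈ f p, ∃ y ∈ f q, G.Adj x y
    · exact absurd ⟨f, h1, hconnG, h3, fun p q hh => hall p q (by simpa [K5] using hh)⟩ hK5
    · obtain ⟨p, hp⟩ := not_forall.mp hall
      obtain ⟨q, hq⟩ := not_forall.mp hp
      obtain ⟨hpq, hnog⟩ := _root_.not_imp.mp hq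
      obtain ⟨x, hx, y, hy, hxy⟩ := h4 p q (by simp [K5, hpq])
      rw [addEdge_adj] at hxy
      rcases hxy with hG | ⟨hne, heq⟩
      · exact absurd ⟨x, hx, y, hy, hG⟩ hnog
      · -- identify the branch sets containing u and v
        have key : ∀ (wu wv : Fin 5), u ∈ f wu → v ∈ f wv → wu ≠ wv → IsMinor K5e G := by
          intro wu wv hwu hwv hwuv
          have main : ∀ p' q', p' ≠ q' → s(p', q') ≠ s(wu, wv) →
              ∃ x ∈ f p', ∃ y ∈ f q', G.Adj x y := by
            intro p' q' hpq' hs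
            obtain ⟨x', hx', y', hy', hxy'⟩ := h4 p' q' (by simp [K5, hpq'])
            rw [addEdge_adj] at hxy'
            rcases hxy' with hG | ⟨hne', heq'⟩
            · exact ⟨x', hx', y', hy', hG⟩
            · exfalso
              rcases Sym2.eq_iff.mp heq' with ⟨rfl, rfl⟩ | ⟨rfl, rfl⟩
              · exact hs (by rw [memf_unique h3 hx' hwu, memf_unique h3 hy' hwv])
              · refine hs ?_
                rw [memf_unique h3 hx' hwv, memf_unique h3 hy' hwu]
                exact Sym2.eq_swap
          refine model_minor K5e G (sig5 wu wv) f h1 hconnG h3 ?_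
          intro i j hij
          obtain ⟨hK, hs⟩ := sig5_adj wu wv hwuv i j hij
          exact main _ _ (by simpa [K5] using hK) hs
        left
        rcases Sym2.eq_iff.mp heq with ⟨rfl, rfl⟩ | ⟨rfl, rfl⟩
        · exact key p q hx hy hpq
        · exact key q p hy hx hpq.symm

section K33case
variable {G : SimpleGraph V} {f : Fin 3 ⊕ Fin 3 → Set V} {w0 i0 : Fin 3 ⊕ Fin 3} {P Q : Set V}

lemma caseFull33
    (h1 : ∀ w, (f w).Nonempty)
    (hconnG : ∀ w, w ≠ w0 → (G.induce (f w)).Connected)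
    (h3 : Pairwise fun a b => Disjoint (f a) (f b))
    (hwit : ∀ p q, K33.Adj p q → p ≠ w0 → q ≠ w0 → ∃ x ∈ f p, ∃ y ∈ f q, G.Adj x y)
    (hPc : (G.induce P).Connected) (hPf : P ⊆ f w0) (hPne : P.Nonempty)
    (hatt : ∀ i, K33.Adj i w0 → ∃ x ∈ f i, ∃ y ∈ P, G.Adj x y) :
    IsMinor K33 G := by
  classical
  set g : (Fin 3 ⊕ Fin 3) → Set V := fun w => if w = w0 then P else f w with hg
  have gw0 : g w0 = P := if_pos rfl
  have gother : ∀ w, w ≠ w0 → g w = f w := fun w hw => if_neg hw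
  refine ⟨g, ?_, ?_, ?_, ?_⟩
  · intro w
    rcases eq_or_ne w w0 with rfl | hw
    · rw [gw0]; exact hPne
    · rw [gother w hw]; exact h1 w
  · intro w
    rcases eq_or_ne w w0 with rfl | hw
    · rw [gw0]; exact hPc
    · rw [gother w hw]; exact hconnG w hw
  · intro a b hab
    rcases eq_or_ne a w0 with rfl | ha
    · rw [gw0, gother b hab.symm]; exact ((h3 hab).mono_left hPf)
    · rcases eq_or_ne b w0 with rfl | hb
      · rw [gw0, gother a ha]; exact ((h3 hab).mono_right hPf)
      · rw [gother a ha, gother b hb]; exact h3 hab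
  · intro a b hab
    rcases eq_or_ne a w0 with rfl | ha
    · obtain ⟨x, hx, y, hy, hxy⟩ := hatt b hab.symm
      exact ⟨y, gw0 ▸ hy, x, (gother b hab.ne') ▸ hx, hxy.symm⟩
    · rcases eq_or_ne b w0 with rfl | hb
      · obtain ⟨x, hx, y, hy, hxy⟩ := hatt a hab
        exact ⟨x, (gother a ha) ▸ hx, y, gw0 ▸ hy, hxy⟩
      · obtain ⟨x, hx, y, hy, hxy⟩ := hwit a b hab ha hb
        exact ⟨x, (gother a ha) ▸ hx, y, (gother b hb) ▸ hy, hxy⟩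

lemma case21
    (hadj : K33.Adj w0 i0)
    (h1 : ∀ w, (f w).Nonempty)
    (hconnG : ∀ w, w ≠ w0 → (G.induce (f w)).Connected)
    (h3 : Pairwise fun a b => Disjoint (f a) (f b))
    (hwit : ∀ p q, K33.Adj p q → p ≠ w0 → q ≠ w0 → ∃ x ∈ f p, ∃ y ∈ f q, G.Adj x y)
    (hPc : (G.induce P).Connected) (hQc : (G.induce Q).Connected)
    (hPf : P ⊆ f w0) (hQf : Q ⊆ f w0) (hPQ : Disjoint P Q) (hPne : P.Nonempty)
    (hattP : ∀ i, K33.Adj i w0 → i ≠ i0 → ∃ x ∈ f i, ∃ y ∈ P, G.Adj x y)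
    (hattQ : ∃ x ∈ f i0, ∃ y ∈ Q, G.Adj x y) :
    IsMinor K33e G := by
  classical
  have hne : i0 ≠ w0 := hadj.ne'
  set g : (Fin 3 ⊕ Fin 3) → Set V :=
    fun w => if w = w0 then P else if w = i0 then f i0 ∪ Q else f w with hg
  have gw0 : g w0 = P := by simp only [hg, if_pos rfl]
  have gi0 : g i0 = f i0 ∪ Q := by simp [hg, hne]
  have gother : ∀ w, w ≠ w0 → w ≠ i0 → g w = f w := fun w h h' => by
    simp only [hg, if_neg h, if_neg h']
  refine model_minor K33e G (sig33 w0 i0) g ?_ ?_ ?_ ?_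
  · intro w
    rcases eq_or_ne w w0 with rfl | hw
    · rw [gw0]; exact hPne
    · rcases eq_or_ne w i0 with rfl | hw'
      · rw [gi0]; exact (h1 w).mono Set.subset_union_left
      · rw [gother w hw hw']; exact h1 w
  · intro w
    rcases eq_or_ne w w0 with rfl | hw
    · rw [gw0]; exact hPc
    · rcases eq_or_ne w i0 with rfl | hw'
      · rw [gi0]
        obtain ⟨x, hx, y, hy, hxy⟩ := hattQ
        exact SimpleGraph.connected_induce_union (hconnG w hne).preconnected hQc.preconnected hx hy hxy
      · rw [gother w hw hw']; exact hconnG w hw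
  · intro a b hab
    rcases eq_or_ne a w0 with rfl | ha
    · rw [gw0]
      rcases eq_or_ne b i0 with rfl | hb'
      · rw [gi0]
        exact Set.disjoint_union_right.mpr ⟨(h3 hab).mono_left hPf, hPQ⟩
      · rw [gother b hab.symm hb']; exact (h3 hab).mono_left hPf
    · rcases eq_or_ne b w0 with rfl | hb
      · rw [gw0]
        rcases eq_or_ne a i0 with rfl | ha'
        · rw [gi0]
          exact Set.disjoint_union_left.mpr ⟨(h3 hab).mono_right hPf, hPQ.symm⟩
        · rw [gother a hab ha']; exact (h3 hab).mono_right hPf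
      · rcases eq_or_ne a i0 with rfl | ha'
        · rw [gi0, gother b hb hab.symm]
          exact Set.disjoint_union_left.mpr ⟨h3 hab, (h3 hb).symm.mono_left hQf⟩
        · rcases eq_or_ne b i0 with rfl | hb'
          · rw [gi0, gother a ha ha']
            exact Set.disjoint_union_right.mpr ⟨h3 hab, (h3 ha).mono_right hQf⟩
          · rw [gother a ha ha', gother b hb hb']; exact h3 hab
  · have main : ∀ p q, K33.Adj p q → s(p, q) ≠ s(w0, i0) → ∃ x ∈ g p, ∃ y ∈ g q, G.Adj x y := by
      intro p q hpq hs
      rcases eq_or_ne p w0 with rfl | hpw0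
      · have hqi0 : q ≠ i0 := fun h => hs (by rw [h])
        obtain ⟨x, hx, y, hy, hxy⟩ := hattP q hpq.symm hqi0
        exact ⟨y, gw0 ▸ hy, x, (gother q hpq.ne' hqi0) ▸ hx, hxy.symm⟩
      · rcases eq_or_ne q w0 with rfl | hqw0
        · have hpi0 : p ≠ i0 := fun h => hs (by rw [h]; exact Sym2.eq_swap)
          obtain ⟨x, hx, y, hy, hxy⟩ := hattP p hpq hpi0
          exact ⟨x, (gother p hpq.ne hpi0) ▸ hx, y, gw0 ▸ hy, hxy⟩
        · rcases eq_or_ne p i0 with rfl | hpi0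
          · obtain ⟨x, hx, y, hy, hxy⟩ := hwit p q hpq hpw0 hqw0
            exact ⟨x, gi0 ▸ Set.mem_union_left _ hx, y, (gother q hqw0 hpq.ne') ▸ hy, hxy⟩
          · rcases eq_or_ne q i0 with rfl | hqi0
            · obtain ⟨x, hx, y, hy, hxy⟩ := hwit p q hpq hpw0 hqw0
              exact ⟨x, (gother p hpw0 hpi0) ▸ hx, y, gi0 ▸ Set.mem_union_left _ hy, hxy⟩
            · obtain ⟨x, hx, y, hy, hxy⟩ := hwit p q hpq hpw0 hqw0
              exact ⟨x, (gother p hpw0 hpi0) ▸ hx, y, (gother q hqw0 hqi0) ▸ hy, hxy⟩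
    intro i j hij
    obtain ⟨hK, hs⟩ := sig33_adj w0 i0 hadj i j hij
    exact main _ _ hK hs
end K33case

lemma A33 {G : SimpleGraph V} {u v : V}
    (hK33 : ¬IsMinor K33 G)
    (hm : IsMinor K33 (AddEdge G u v)) :
    IsMinor K33e G := by
  classical
  obtain ⟨f, h1, h2, h3, h4⟩ := hm
  by_cases hcase : ∃ w0, u ∈ f w0 ∧ v ∈ f w0
  · obtain ⟨w0, huw, hvw⟩ := hcase
    have hwit : ∀ p q, K33.Adj p q → ∃ x ∈ f p, ∃ y ∈ f q, G.Adj x y := by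
      intro p q hpq
      obtain ⟨x, hx, y, hy, hxy⟩ := h4 p q hpq
      rw [addEdge_adj] at hxy
      rcases hxy with hG | ⟨hne, heq⟩
      · exact ⟨x, hx, y, hy, hG⟩
      · exfalso
        rcases Sym2.eq_iff.mp heq with ⟨rfl, rfl⟩ | ⟨rfl, rfl⟩
        · exact hpq.ne ((memf_unique h3 hx huw).trans (memf_unique h3 hvw hy))
        · exact hpq.ne ((memf_unique h3 hx hvw).trans (memf_unique h3 huw hy))
    have hother : ∀ w, w ≠ w0 → ¬(u ∈ f w ∧ v ∈ f w) := fun w hw ⟨hu', _⟩ =>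
      hw (memf_unique h3 hu' huw)
    have hconnG : ∀ w, w ≠ w0 → (G.induce (f w)).Connected := by
      intro w hw
      rw [← induce_addEdge_eq (u := u) (v := v) (hother w hw)]
      exact h2 w
    by_cases hB : (G.induce (f w0)).Connected
    · exfalso
      apply hK33
      refine ⟨f, h1, ?_, h3, hwit⟩
      intro w
      rcases eq_or_ne w w0 with rfl | hw
      · exact hB
      · exact hconnG w hw
    · obtain ⟨P, Q, huP, hvQ, hPQu, hPQd, hPc, hQc⟩ :=
        split_of_not_connected huw hvw (h2 w0) hB
      have hPf : P ⊆ f w0 := hPQu ▸ Set.subset_union_left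
      have hQf : Q ⊆ f w0 := hPQu ▸ Set.subset_union_right
      have hattex : ∀ i, ∃ x y, K33.Adj i w0 → (x ∈ f i ∧ y ∈ f w0 ∧ G.Adj x y) := by
        intro i
        by_cases hi : K33.Adj i w0
        · obtain ⟨x, hx, y, hy, h⟩ := hwit i w0 hi
          exact ⟨x, y, fun _ => ⟨hx, hy, h⟩⟩
        · exact ⟨u, u, fun h => absurd h hi⟩
      choose X Y hXY' using hattex
      have hX : ∀ i, K33.Adj i w0 → X i ∈ f i := fun i hi => (hXY' i hi).1
      have hY : ∀ i, K33.Adj i w0 → Y i ∈ f w0 := fun i hi => (hXY' i hi).2.1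
      have hXY : ∀ i, K33.Adj i w0 → G.Adj (X i) (Y i) := fun i hi => (hXY' i hi).2.2
      have hYPQ : ∀ i, K33.Adj i w0 → Y i ∈ P ∨ Y i ∈ Q := by
        intro i hi
        have h' := hY i hi
        rw [← hPQu] at h'
        exact h'
      have hN3 : ∀ w : Fin 3 ⊕ Fin 3, (Finset.univ.filter (fun i => K33.Adj i w)).card = 3 := by
        decide
      set N : Finset (Fin 3 ⊕ Fin 3) := Finset.univ.filter (fun i => K33.Adj i w0) with hN
      set T : Finset (Fin 3 ⊕ Fin 3) := N.filter (fun i => Y i ∈ P) with hT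
      have hTsub : T ⊆ N := Finset.filter_subset _ _
      have hmemT : ∀ i, i ∈ T ↔ (K33.Adj i w0 ∧ Y i ∈ P) := by
        intro i
        simp only [hT, hN, Finset.mem_filter, Finset.mem_univ, true_and]
      have hmemCo : ∀ i, K33.Adj i w0 → i ∉ T → Y i ∈ Q := by
        intro i hi hiT
        rcases hYPQ i hi with h | h
        · exact absurd ((hmemT i).mpr ⟨hi, h⟩) hiT
        · exact h
      by_cases hTall : ∀ i, K33.Adj i w0 → i ∈ T
      · exfalso
        apply hK33
        exact caseFull33 h1 hconnG h3 (fun p q hh hp hq => hwit p q hh) hPc hPf ⟨u, huP⟩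
          (fun i hi => ⟨X i, hX i hi, Y i, ((hmemT i).mp (hTall i hi)).2, hXY i hi⟩)
      · by_cases hTnone : ∀ i, K33.Adj i w0 → i ∉ T
        · exfalso
          apply hK33
          exact caseFull33 h1 hconnG h3 (fun p q hh hp hq => hwit p q hh) hQc hQf ⟨v, hvQ⟩
            (fun i hi => ⟨X i, hX i hi, Y i, hmemCo i hi (hTnone i hi), hXY i hi⟩)
        · obtain ⟨i1, hi1⟩ := not_forall.mp hTnone
          obtain ⟨hi1w, hi1T'⟩ := _root_.not_imp.mp hi1
          have hi1T : i1 ∈ T := not_not.mp hi1T'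
          obtain ⟨i2, hi2⟩ := not_forall.mp hTall
          obtain ⟨hi2w, hi2T⟩ := _root_.not_imp.mp hi2
          have hmemN : ∀ i, i ∈ N ↔ K33.Adj i w0 := by
            intro i
            simp only [hN, Finset.mem_filter, Finset.mem_univ, true_and]
          set C := N \ T with hC
          have hmemC : ∀ i, i ∈ C ↔ (K33.Adj i w0 ∧ i ∉ T) := by
            intro i
            simp only [hC, Finset.mem_sdiff, hmemN]
          have hCcard : C.card = 3 - T.card := by
            rw [hC, Finset.card_sdiff_of_subset hTsub, hN, hN3]
          have hTpos : 0 < T.card := Finset.card_pos.mpr ⟨i1, hi1T⟩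
          have hCpos : 0 < C.card := Finset.card_pos.mpr ⟨i2, (hmemC i2).mpr ⟨hi2w, hi2T⟩⟩
          have hTle : T.card ≤ 3 := by
            have := Finset.card_le_card hTsub
            rw [hN, hN3] at this
            exact this
          have h12 : T.card = 1 ∨ T.card = 2 := by omega
          have hYP : ∀ i, i ∈ T → Y i ∈ P := fun i hi => ((hmemT i).mp hi).2
          have hTw : ∀ i, i ∈ T → K33.Adj i w0 := fun i hi => ((hmemT i).mp hi).1
          rcases h12 with h | h
          · -- one attaches to P, two to Q : use Q as the big side
            obtain ⟨i0, hTi0⟩ := Finset.card_eq_one.mp h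
            have hi0T : i0 ∈ T := by rw [hTi0]; exact Finset.mem_singleton_self i0
            have hi0w : K33.Adj i0 w0 := hTw i0 hi0T
            refine case21 hi0w.symm h1 hconnG h3 (fun p q hh hp hq => hwit p q hh)
              hQc hPc hQf hPf hPQd.symm ⟨v, hvQ⟩ ?_ ?_
            · intro i hi hii0
              refine ⟨X i, hX i hi, Y i, hmemCo i hi ?_, hXY i hi⟩
              intro hmem
              rw [hTi0] at hmem
              exact hii0 (Finset.mem_singleton.mp hmem)
            · exact ⟨X i0, hX i0 hi0w, Y i0, hYP i0 hi0T, hXY i0 hi0w⟩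
          · -- two attach to P, one to Q
            have hCc : C.card = 1 := by omega
            obtain ⟨i0, hCi0⟩ := Finset.card_eq_one.mp hCc
            have hi0C : i0 ∈ C := by rw [hCi0]; exact Finset.mem_singleton_self i0
            have hi0w := ((hmemC i0).mp hi0C).1
            have hi0T := ((hmemC i0).mp hi0C).2
            refine case21 hi0w.symm h1 hconnG h3 (fun p q hh hp hq => hwit p q hh)
              hPc hQc hPf hQf hPQd ⟨u, huP⟩ ?_ ?_
            · intro i hi hii0
              have hiT : i ∈ T := by
                by_contra hiT
                have : i ∈ C := (hmemC i).mpr ⟨hi, hiT⟩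
                rw [hCi0] at this
                exact hii0 (Finset.mem_singleton.mp this)
              exact ⟨X i, hX i hi, Y i, hYP i hiT, hXY i hi⟩
            · exact ⟨X i0, hX i0 hi0w, Y i0, hmemCo i0 hi0w hi0T, hXY i0 hi0w⟩
  · have hconnG : ∀ w, (G.induce (f w)).Connected := by
      intro w
      rw [← induce_addEdge_eq (u := u) (v := v) (fun hcon => hcase ⟨w, hcon⟩)]
      exact h2 w
    by_cases hall : ∀ p q, K33.Adj p q → ∃ x ∈ f p, ∃ y ∈ f q, G.Adj x y
    · exact absurd ⟨f, h1, hconnG, h3, hall⟩ hK33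
    · obtain ⟨p, hp⟩ := not_forall.mp hall
      obtain ⟨q, hq⟩ := not_forall.mp hp
      obtain ⟨hpq, hnog⟩ := _root_.not_imp.mp hq
      obtain ⟨x, hx, y, hy, hxy⟩ := h4 p q hpq
      rw [addEdge_adj] at hxy
      rcases hxy with hG | ⟨hne, heq⟩
      · exact absurd ⟨x, hx, y, hy, hG⟩ hnog
      · have key : ∀ (wu wv : Fin 3 ⊕ Fin 3), u ∈ f wu → v ∈ f wv → K33.Adj wu wv →
            IsMinor K33e G := by
          intro wu wv hwu hwv hwuv
          have main : ∀ p' q', K33.Adj p' q' → s(p', q') ≠ s(wu, wv) →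
              ∃ x ∈ f p', ∃ y ∈ f q', G.Adj x y := by
            intro p' q' hpq' hs
            obtain ⟨x', hx', y', hy', hxy'⟩ := h4 p' q' hpq'
            rw [addEdge_adj] at hxy'
            rcases hxy' with hG | ⟨hne', heq'⟩
            · exact ⟨x', hx', y', hy', hG⟩
            · exfalso
              rcases Sym2.eq_iff.mp heq' with ⟨rfl, rfl⟩ | ⟨rfl, rfl⟩
              · exact hs (by rw [memf_unique h3 hx' hwu, memf_unique h3 hy' hwv])
              · refine hs ?_
                rw [memf_unique h3 hx' hwv, memf_unique h3 hy' hwu]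
                exact Sym2.eq_swap
          refine model_minor K33e G (sig33 wu wv) f h1 hconnG h3 ?_
          intro i j hij
          obtain ⟨hK, hs⟩ := sig33_adj wu wv hwuv i j hij
          exact main _ _ hK hs
        rcases Sym2.eq_iff.mp heq with ⟨rfl, rfl⟩ | ⟨rfl, rfl⟩
        · exact key p q hx hy hpq
        · exact key q p hy hx hpq.symm




lemma nonplanar_cases {G : SimpleGraph V} (h : ¬ Planar G) :
    IsMinor K5 G ∨ IsMinor K33 G := by
  by_contra hc
  push_neg at hc
  exact h ⟨hc.1, hc.2⟩

lemma claimA {G : SimpleGraph V} {u v : V} (hp : Planar G)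
    (hnp : ¬ Planar (AddEdge G u v)) : IsMinor K5e G ∨ IsMinor K33e G := by
  rcases nonplanar_cases hnp with h | h
  · exact A5 hp.1 h
  · exact Or.inr (A33 hp.2 h)

lemma addEdge_restore {H : SimpleGraph V} {u v : V} (huv : H.Adj u v) :
    IsMinor H (AddEdge (H.deleteEdges {s(u, v)}) u v) := by
  refine minor_of_injAdj id Function.injective_id ?_
  intro a b hab
  rw [addEdge_adj]
  by_cases hs : s(a, b) = s(u, v)
  · exact Or.inr ⟨hab.ne, hs⟩
  · refine Or.inl ?_
    have hne : s(a, b) ∉ ({s(u, v)} : Set (Sym2 V)) := by simpa using hs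
    exact (SimpleGraph.deleteEdges_adj.mpr ⟨hab, hne⟩)

lemma planar_K5e : Planar K5e := by
  constructor
  · intro h
    have hle := pairs_count_le h
    have c1 : (Finset.univ.filter fun p : Fin 5 × Fin 5 => K5.Adj p.1 p.2).card = 20 := by decide
    have c2 : (Finset.univ.filter fun p : Fin 5 × Fin 5 => K5e.Adj p.1 p.2).card = 18 := by
      decide
    omega
  · intro h
    obtain ⟨r, hr⟩ := exists_inj_of_isMinor h
    have := Fintype.card_le_of_injective r hr
    simp [Fintype.card_sum] at this

lemma planar_K33e : Planar K33e := by
  constructor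
  · intro h
    have hle := pairs_count_le h
    have c1 : (Finset.univ.filter fun p : Fin 5 × Fin 5 => K5.Adj p.1 p.2).card = 20 := by decide
    have c2 : (Finset.univ.filter
        fun p : (Fin 3 ⊕ Fin 3) × (Fin 3 ⊕ Fin 3) => K33e.Adj p.1 p.2).card = 16 := by decide
    omega
  · intro h
    have hle := pairs_count_le h
    have c1 : (Finset.univ.filter
        fun p : (Fin 3 ⊕ Fin 3) × (Fin 3 ⊕ Fin 3) => K33.Adj p.1 p.2).card = 18 := by decide
    have c2 : (Finset.univ.filter
        fun p : (Fin 3 ⊕ Fin 3) × (Fin 3 ⊕ Fin 3) => K33e.Adj p.1 p.2).card = 16 := by decide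
    omega

lemma not_isMinor_K5e_K33e : ¬ IsMinor K5e K33e := by
  intro h
  have hle := pairs_count_le h
  have c1 : (Finset.univ.filter fun p : Fin 5 × Fin 5 => K5e.Adj p.1 p.2).card = 18 := by decide
  have c2 : (Finset.univ.filter
      fun p : (Fin 3 ⊕ Fin 3) × (Fin 3 ⊕ Fin 3) => K33e.Adj p.1 p.2).card = 16 := by decide
  omega

lemma AN_K5e : AN K5e := by
  refine ⟨planar_K5e, 0, 1, by decide, by decide, ?_⟩
  intro hP
  have hK : K5.Adj 0 1 := by decide
  have := addEdge_restore (H := K5) (u := (0 : Fin 5)) (v := 1) hK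
  exact hP.1 this

lemma AN_K33e : AN K33e := by
  refine ⟨planar_K33e, Sum.inl 0, Sum.inr 0, by decide, by decide, ?_⟩
  intro hP
  have hK : K33.Adj (Sum.inl 0) (Sum.inr 0) := by decide
  have := addEdge_restore (H := K33) (u := Sum.inl (0 : Fin 3)) (v := Sum.inr 0) hK
  exact hP.2 this

lemma MM_K5e : MinorMinimal (fun {_} H => AN H) K5e := by
  refine ⟨AN_K5e, ?_⟩
  rintro W H ⟨hHm, hnotm⟩ hAN
  classical
  obtain ⟨r, hr⟩ := exists_inj_of_isMinor hHm
  haveI : Fintype W := Fintype.ofInjective r hr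
  have hcard : Fintype.card W ≤ 5 := by
    have := Fintype.card_le_of_injective r hr
    simpa using this
  obtain ⟨⟨hp5, hp33⟩, u, v, hne, hnadj, hnp⟩ := hAN
  rcases nonplanar_cases hnp with h | h
  · rcases A5 hp5 h with h5e | h33e
    · exact hnotm h5e
    · obtain ⟨r2, hr2⟩ := exists_inj_of_isMinor h33e
      have := Fintype.card_le_of_injective r2 hr2
      simp [Fintype.card_sum] at this
      omega
  · obtain ⟨r2, hr2⟩ := exists_inj_of_isMinor h
    have := Fintype.card_le_of_injective r2 hr2
    simp [Fintype.card_sum] at this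
    omega

lemma MM_K33e : MinorMinimal (fun {_} H => AN H) K33e := by
  refine ⟨AN_K33e, ?_⟩
  rintro W H ⟨hHm, hnotm⟩ hAN
  classical
  obtain ⟨r, hr⟩ := exists_inj_of_isMinor hHm
  haveI : Fintype W := Fintype.ofInjective r hr
  obtain ⟨⟨hp5, hp33⟩, u, v, hne, hnadj, hnp⟩ := hAN
  rcases nonplanar_cases hnp with h | h
  · rcases A5 hp5 h with h5e | h33e
    · exact not_isMinor_K5e_K33e (isMinor_trans h5e hHm)
    · exact hnotm h33e
  · exact hnotm (A33 hp33 h)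

lemma isMinor_of_iso {G : SimpleGraph V} {G' : SimpleGraph W} (e : G ≃g G') :
    IsMinor G G' :=
  minor_of_injAdj e e.toEquiv.injective (fun a b h => e.map_rel_iff.mpr h)

lemma isMinor_congr {U' : Type} {G : SimpleGraph V} {G' : SimpleGraph W}
    (e : G ≃g G') (H : SimpleGraph U') : IsMinor H G ↔ IsMinor H G' :=
  ⟨fun h => isMinor_trans h (isMinor_of_iso e), fun h => isMinor_trans h (isMinor_of_iso e.symm)⟩

lemma planar_congr {G : SimpleGraph V} {G' : SimpleGraph W} (e : G ≃g G') :
    Planar G ↔ Planar G' := by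
  unfold Planar
  rw [isMinor_congr e K5, isMinor_congr e K33]

def addEdge_iso {G : SimpleGraph V} {G' : SimpleGraph W} (e : G ≃g G') (u v : V) :
    AddEdge G u v ≃g AddEdge G' (e u) (e v) := by
  refine ⟨e.toEquiv, ?_⟩
  intro a b
  show (AddEdge G' (e u) (e v)).Adj (e a) (e b) ↔ (AddEdge G u v).Adj a b
  rw [addEdge_adj, addEdge_adj]
  have hinj := e.toEquiv.injective
  constructor
  · rintro (h | ⟨hne, heq⟩)
    · exact Or.inl (e.map_rel_iff.mp h)
    · refine Or.inr ⟨fun hh => hne (by rw [hh]), ?_⟩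
      rcases Sym2.eq_iff.mp heq with ⟨h1, h2⟩ | ⟨h1, h2⟩
      · rw [hinj h1, hinj h2]
      · rw [hinj h1, hinj h2]; exact Sym2.eq_swap
  · rintro (h | ⟨hne, heq⟩)
    · exact Or.inl (e.map_rel_iff.mpr h)
    · refine Or.inr ⟨fun hh => hne (hinj hh), ?_⟩
      rcases Sym2.eq_iff.mp heq with ⟨h1, h2⟩ | ⟨h1, h2⟩
      · rw [h1, h2]
      · rw [h1, h2]; exact Sym2.eq_swap

lemma AN_congr {G : SimpleGraph V} {G' : SimpleGraph W} (e : G ≃g G') (h : AN G) : AN G' := by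
  obtain ⟨hP, u, v, hne, hnadj, hnp⟩ := h
  refine ⟨(planar_congr e).mp hP, e u, e v, fun hh => hne (e.toEquiv.injective hh),
    fun hadj => hnadj (e.map_rel_iff.mp hadj), fun hPl => hnp ?_⟩
  exact (planar_congr (addEdge_iso e u v)).mpr hPl

lemma MM_congr {G : SimpleGraph V} {G' : SimpleGraph W} (e : G ≃g G')
    (h : MinorMinimal (fun {_} H => AN H) G) : MinorMinimal (fun {_} H => AN H) G' := by
  refine ⟨AN_congr e h.1, ?_⟩
  rintro U' H ⟨hm, hnm⟩
  exact h.2 U' H ⟨isMinor_trans hm (isMinor_of_iso e.symm),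
    fun hGH => hnm (isMinor_trans (isMinor_of_iso e.symm) hGH)⟩


/-- The minor minimal almost nonplanar graphs are exactly `K₅ - e` and `K₃,₃ - e`. -/
theorem stmt_3 {V : Type} [Fintype V] (G : SimpleGraph V) :
    MinorMinimal (fun {_} H => AN H) G ↔
      (Nonempty (G ≃g K5e) ∨ Nonempty (G ≃g K33e)) := by
  constructor
  · intro h
    obtain ⟨⟨hP, u, v, hne, hnadj, hnp⟩, hmin⟩ := h
    have hKe : IsMinor K5e G ∨ IsMinor K33e G := claimA hP hnp
    rcases hKe with h5 | h33
    · left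
      have hGm : IsMinor G K5e := by
        by_contra hc
        exact hmin (Fin 5) K5e ⟨h5, hc⟩ AN_K5e
      exact iso_of_mutual_minor h5 hGm
    · right
      have hGm : IsMinor G K33e := by
        by_contra hc
        exact hmin (Fin 3 ⊕ Fin 3) K33e ⟨h33, hc⟩ AN_K33e
      exact iso_of_mutual_minor h33 hGm
  · rintro (h | h)
    · obtain ⟨e⟩ := h
      exact MM_congr e.symm MM_K5e
    · obtain ⟨e⟩ := h
      exact MM_congr e.symm MM_K33e
end

section
/- If G is homeomorphic to K_5 or K_{3,3} and {a,b} is a cut set of G with G - a, b = G_1 ⊔ G_2, then one of the induced subgraphs on V(G_1) ∪ {a,b} and V(G_2) ∪ {a,b} is a path from a to b. -/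
open SimpleGraph

/-- `G` is a subdivision of `H` (homeomorphic to `H`): `G` is obtained, up to
isomorphism, from `H` by repeatedly subdividing edges. -/
inductive IsSubdivisionOf : {V : Type} → SimpleGraph V → {W : Type} → SimpleGraph W → Prop
  | iso {V W : Type} {G : SimpleGraph V} {H : SimpleGraph W} (e : G ≃g H) :
      IsSubdivisionOf G H
  | step {V W : Type} {G : SimpleGraph V} {H : SimpleGraph W} (u v : W) (h : H.Adj u v)
      (hs : IsSubdivisionOf G (SubdivideEdge H u v)) : IsSubdivisionOf G H

/-- The induced subgraph of `G` on `S` is precisely a path from `a` to `b`. -/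
def InducedIsPath {V : Type} (G : SimpleGraph V) (S : Set V) (a b : V) : Prop :=
  ∃ p : G.Walk a b, p.IsPath ∧ (∀ v : V, v ∈ p.support ↔ v ∈ S) ∧
    (∀ x y : V, x ∈ S → y ∈ S → (G.Adj x y ↔ s(x, y) ∈ p.edges))

section AuxProof

variable {V : Type} {K : SimpleGraph V} {u v : V}

lemma sub_adj_some_some {x y : V} :
    (SubdivideEdge K u v).Adj (some x) (some y) ↔ K.Adj x y ∧ s(x, y) ≠ s(u, v) := by
  simp [SubdivideEdge, Sym2.eq_iff, SimpleGraph.map_adj']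
  exact fun h _ _ => h.ne

lemma sub_adj_none_iff {y : Option V} :
    (SubdivideEdge K u v).Adj none y ↔ y = some u ∨ y = some v := by
  cases y with
  | none => simp [SubdivideEdge, Sym2.eq_iff]
  | some z => simp [SubdivideEdge, Sym2.eq_iff, SimpleGraph.map_adj']

lemma sub_adj_none_some {x : V} (h : x = u ∨ x = v) :
    (SubdivideEdge K u v).Adj none (some x) := by
  rw [sub_adj_none_iff]; rcases h with h | h <;> simp [h]

lemma sub_adj_some_none {x : V} (h : x = u ∨ x = v) :
    (SubdivideEdge K u v).Adj (some x) none :=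
  (sub_adj_none_some h).symm

open Classical in
noncomputable def liftWalk (K : SimpleGraph V) (u v : V) :
    {x y : V} → K.Walk x y → (SubdivideEdge K u v).Walk (some x) (some y)
  | _, _, Walk.nil => Walk.nil
  | x, y, Walk.cons (v := z) h p =>
      if hc : s(x, z) = s(u, v) then
        Walk.cons (sub_adj_some_none (by
          rcases Sym2.eq_iff.mp hc with ⟨h1, h2⟩ | ⟨h1, h2⟩
          · exact Or.inl h1
          · exact Or.inr h1))
          (Walk.cons (sub_adj_none_some (by
            rcases Sym2.eq_iff.mp hc with ⟨h1, h2⟩ | ⟨h1, h2⟩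
            · exact Or.inr h2
            · exact Or.inl h2)) (liftWalk K u v p))
      else Walk.cons (sub_adj_some_some.mpr ⟨h, hc⟩) (liftWalk K u v p)

lemma liftWalk_mem_support_some {x y z : V} (p : K.Walk x y) :
    some z ∈ (liftWalk K u v p).support ↔ z ∈ p.support := by
  induction p with
  | nil => simp [liftWalk]
  | cons h p ih =>
    rw [liftWalk]
    split_ifs with hc
    · simp [ih]
    · simp [ih]

lemma liftWalk_none_mem_support {x y : V} (p : K.Walk x y) :
    none ∈ (liftWalk K u v p).support ↔ s(u, v) ∈ p.edges := by
  induction p with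
  | nil => simp [liftWalk]
  | cons h p ih =>
    rename_i x z y
    rw [liftWalk]
    split_ifs with hc
    · simp [← hc]
    · have hne : s(u, v) ≠ s(x, z) := fun hh => hc hh.symm
      simp [ih, hne]

lemma liftWalk_edge_some_some {x y a b : V} (p : K.Walk x y) :
    s(some a, some b) ∈ (liftWalk K u v p).edges ↔ s(a, b) ∈ p.edges ∧ s(a, b) ≠ s(u, v) := by
  induction p with
  | nil => simp [liftWalk]
  | cons h p ih =>
    rename_i x z y
    rw [liftWalk]
    split_ifs with hc
    · simp only [Walk.edges_cons, List.mem_cons, ih]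
      constructor
      · rintro (h1 | h1 | h1)
        · simp [Sym2.eq_iff] at h1
        · simp [Sym2.eq_iff] at h1
        · exact ⟨Or.inr h1.1, h1.2⟩
      · rintro ⟨(h1 | h1), h2⟩
        · exact absurd (h1.trans hc) h2
        · exact Or.inr (Or.inr ⟨h1, h2⟩)
    · simp only [Walk.edges_cons, List.mem_cons, ih]
      constructor
      · rintro (h1 | h1)
        · simp only [Sym2.eq_iff, Option.some.injEq] at h1
          rcases h1 with ⟨h2, h3⟩ | ⟨h2, h3⟩
          · subst h2; subst h3; exact ⟨Or.inl rfl, hc⟩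
          · subst h2; subst h3
            refine ⟨Or.inl Sym2.eq_swap, fun hh => hc (Sym2.eq_swap.trans hh)⟩
        · exact ⟨Or.inr h1.1, h1.2⟩
      · rintro ⟨(h1 | h1), h2⟩
        · have h3 := congrArg (Sym2.map some) h1
          rw [Sym2.map_pair_eq, Sym2.map_pair_eq] at h3
          exact Or.inl h3
        · exact Or.inr ⟨h1, h2⟩

lemma liftWalk_edge_none_some {x y z : V} (p : K.Walk x y) :
    s(none, some z) ∈ (liftWalk K u v p).edges ↔ (z = u ∨ z = v) ∧ s(u, v) ∈ p.edges := by
  induction p with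
  | nil => simp [liftWalk]
  | cons h p ih =>
    rw [liftWalk]
    split_ifs with hc
    · simp only [Walk.edges_cons, List.mem_cons, ih]
      rcases Sym2.eq_iff.mp hc with ⟨h1, h2⟩ | ⟨h1, h2⟩ <;> subst h1 <;> subst h2 <;>
      · constructor
        · rintro (h1 | h1 | h1)
          · simp only [Sym2.eq_iff] at h1
            rcases h1 with ⟨h1,h2⟩|⟨h1,h2⟩ <;> simp_all
          · simp only [Sym2.eq_iff] at h1
            rcases h1 with ⟨h1,h2⟩|⟨h1,h2⟩ <;> simp_all
          · exact ⟨h1.1, Or.inr h1.2⟩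
        · rintro ⟨h1, h2⟩
          rcases h1 with rfl | rfl
          · simp [Sym2.eq_iff]
          · simp [Sym2.eq_iff]
    · simp only [Walk.edges_cons, List.mem_cons, ih]
      constructor
      · rintro (h1 | h1)
        · simp [Sym2.eq_iff] at h1
        · exact ⟨h1.1, Or.inr h1.2⟩
      · rintro ⟨h1, h2⟩
        rcases h2 with h2 | h2
        · exact absurd h2.symm hc
        · exact Or.inr ⟨h1, h2⟩

lemma liftWalk_isPath {x y : V} {p : K.Walk x y} (hp : p.IsPath) :
    (liftWalk K u v p).IsPath := by
  induction p with
  | nil => rw [liftWalk]; exact Walk.IsPath.nil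
  | cons h p ih =>
    rw [Walk.cons_isPath_iff] at hp
    rw [liftWalk]
    split_ifs with hc
    · refine Walk.IsPath.cons (Walk.IsPath.cons (ih hp.1) ?_) ?_
      · rw [liftWalk_none_mem_support]
        intro hmem
        rcases Sym2.eq_iff.mp hc with ⟨h1, h2⟩ | ⟨h1, h2⟩
        · subst h1; subst h2
          exact hp.2 (Walk.fst_mem_support_of_mem_edges p hmem)
        · subst h1; subst h2
          exact hp.2 (Walk.snd_mem_support_of_mem_edges p hmem)
      · simp only [Walk.support_cons, List.mem_cons]
        rintro (h1 | h1)
        · exact Option.some_ne_none _ h1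
        · rw [liftWalk_mem_support_some] at h1
          exact hp.2 h1
    · refine Walk.IsPath.cons (ih hp.1) ?_
      rw [liftWalk_mem_support_some]
      exact hp.2
/- ### auxiliary notions -/

def MinDeg2 {V : Type} (G : SimpleGraph V) : Prop :=
  ∀ x : V, ∃ y z : V, y ≠ z ∧ G.Adj x y ∧ G.Adj x z

def NoSep1 {V : Type} (G : SimpleGraph V) : Prop :=
  G.Preconnected ∧ ∀ c x y : V, x ≠ c → y ≠ c → ∃ p : G.Walk x y, c ∉ p.support

def SepProp {V : Type} (G : SimpleGraph V) : Prop :=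
  ∀ a b : V, a ≠ b → ∀ S1 S2 : Set V,
    S1 ∪ S2 = {v | v ≠ a ∧ v ≠ b} → Disjoint S1 S2 → S1.Nonempty → S2.Nonempty →
    (∀ x ∈ S1, ∀ y ∈ S2, ¬ G.Adj x y) →
    InducedIsPath G (S1 ∪ {a, b}) a b ∨ InducedIsPath G (S2 ∪ {a, b}) a b

def GoodG {V : Type} (G : SimpleGraph V) : Prop :=
  MinDeg2 G ∧ NoSep1 G ∧ SepProp G

/- ### small helpers -/

lemma mkInduced {W : Type} {G : SimpleGraph W} {S : Set W} {a b : W}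
    (p : G.Walk a b) (hp : p.IsPath) (hsup : ∀ z, z ∈ p.support ↔ z ∈ S)
    (hfwd : ∀ x y, x ∈ S → y ∈ S → G.Adj x y → s(x, y) ∈ p.edges) :
    InducedIsPath G S a b :=
  ⟨p, hp, hsup, fun x y hx hy => ⟨hfwd x y hx hy, fun h => p.adj_of_mem_edges h⟩⟩

lemma InducedIsPath.symm' {W : Type} {G : SimpleGraph W} {S : Set W} {a b : W}
    (h : InducedIsPath G S a b) : InducedIsPath G S b a := by
  obtain ⟨p, hp, hsup, hadj⟩ := h
  refine ⟨p.reverse, hp.reverse, fun z => ?_, fun x y hx hy => ?_⟩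
  · rw [Walk.support_reverse, List.mem_reverse]; exact hsup z
  · rw [Walk.edges_reverse, List.mem_reverse]; exact hadj x y hx hy

lemma inducedIsPath_two {W : Type} {G : SimpleGraph W} {a m b : W}
    (ha : G.Adj a m) (hb : G.Adj m b) (hab : a ≠ b) (hnadj : ¬ G.Adj a b) :
    InducedIsPath G {a, m, b} a b := by
  have ham := ha.ne
  have hmb := hb.ne
  refine mkInduced (Walk.cons ha (Walk.cons hb Walk.nil)) ?_ (fun z => ?_) ?_
  · simp [Walk.isPath_def, ham, hmb, hab]
  · simp [Set.mem_insert_iff]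
  · intro x y hx hy hadj
    simp only [Set.mem_insert_iff, Set.mem_singleton_iff] at hx hy
    rcases hx with rfl | rfl | rfl <;> rcases hy with rfl | rfl | rfl <;>
      first
        | exact (G.loopless.irrefl _ hadj).elim
        | exact (hnadj hadj).elim
        | exact (hnadj hadj.symm).elim
        | simp [Sym2.eq_iff]

lemma first_edge {W : Type} {G : SimpleGraph W} {x y z : W} (p : G.Walk x y)
    (hp : p.IsPath) (he : s(x, z) ∈ p.edges) :
    ∃ (h : G.Adj x z) (q : G.Walk z y), p = Walk.cons h q := by
  cases p with
  | nil => simp at he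
  | cons h q =>
    rename_i m
    rw [Walk.cons_isPath_iff] at hp
    simp only [Walk.edges_cons, List.mem_cons] at he
    rcases he with he | he
    · rcases Sym2.eq_iff.mp he with ⟨-, rfl⟩ | ⟨h1, h2⟩
      · exact ⟨h, q, rfl⟩
      · exfalso; subst h1; exact G.loopless.irrefl _ h
    · exact absurd (q.fst_mem_support_of_mem_edges he) hp.2

lemma edge_endpoints_support {W : Type} {G : SimpleGraph W} {a b : W} {p : G.Walk a b}
    (hp : p.IsPath) (he : s(a, b) ∈ p.edges) : ∀ z ∈ p.support, z = a ∨ z = b := by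
  obtain ⟨h, q, rfl⟩ := first_edge p hp he
  rw [Walk.cons_isPath_iff] at hp
  have : q = Walk.nil := Walk.isPath_iff_eq_nil.mp hp.1
  subst this
  intro z hz
  simpa using hz

/- ### base cases -/

lemma minDeg2_K5 : MinDeg2 K5 := by
  intro x
  have h : ∃ y z : Fin 5, y ≠ z ∧ x ≠ y ∧ x ≠ z := by
    fin_cases x
    · exact ⟨1, 2, by decide, by decide, by decide⟩
    · exact ⟨0, 2, by decide, by decide, by decide⟩
    · exact ⟨0, 1, by decide, by decide, by decide⟩
    · exact ⟨0, 1, by decide, by decide, by decide⟩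
    · exact ⟨0, 1, by decide, by decide, by decide⟩
  obtain ⟨y, z, h1, h2, h3⟩ := h
  exact ⟨y, z, h1, by simpa [K5] using h2, by simpa [K5] using h3⟩

lemma minDeg2_K33 : MinDeg2 K33 := by
  intro x
  cases x with
  | inl i =>
    refine ⟨Sum.inr 0, Sum.inr 1, by simp, ?_, ?_⟩ <;> simp [K33]
  | inr i =>
    refine ⟨Sum.inl 0, Sum.inl 1, by simp, ?_, ?_⟩ <;> simp [K33]

lemma exists_inr_ne (a b : Fin 3 ⊕ Fin 3) :
    ∃ k : Fin 3, (Sum.inr k : Fin 3 ⊕ Fin 3) ≠ a ∧ (Sum.inr k : Fin 3 ⊕ Fin 3) ≠ b := by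
  by_contra hcon
  push_neg at hcon
  have h' : ∀ k : Fin 3, (Sum.inr k : Fin 3 ⊕ Fin 3) = a ∨ (Sum.inr k : Fin 3 ⊕ Fin 3) = b :=
    fun k => or_iff_not_imp_left.mpr (hcon k)
  rcases h' 0 with h0 | h0 <;> rcases h' 1 with h1 | h1 <;> rcases h' 2 with h2 | h2 <;>
    first
      | (rw [← h0] at h1; simp at h1)
      | (rw [← h0] at h2; simp at h2)
      | (rw [← h1] at h2; simp at h2)

lemma exists_inl_ne (a b : Fin 3 ⊕ Fin 3) :
    ∃ k : Fin 3, (Sum.inl k : Fin 3 ⊕ Fin 3) ≠ a ∧ (Sum.inl k : Fin 3 ⊕ Fin 3) ≠ b := by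
  by_contra hcon
  push_neg at hcon
  have h' : ∀ k : Fin 3, (Sum.inl k : Fin 3 ⊕ Fin 3) = a ∨ (Sum.inl k : Fin 3 ⊕ Fin 3) = b :=
    fun k => or_iff_not_imp_left.mpr (hcon k)
  rcases h' 0 with h0 | h0 <;> rcases h' 1 with h1 | h1 <;> rcases h' 2 with h2 | h2 <;>
    first
      | (rw [← h0] at h1; simp at h1)
      | (rw [← h0] at h2; simp at h2)
      | (rw [← h1] at h2; simp at h2)

lemma noSep1_K5 : NoSep1 K5 := by
  constructor
  · intro x y
    by_cases h : x = y
    · exact h ▸ Reachable.refl x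
    · exact (by simpa [K5] using h : K5.Adj x y).reachable
  · intro c x y hxc hyc
    by_cases h : x = y
    · subst h; exact ⟨Walk.nil, by simpa using fun h' => hxc h'.symm⟩
    · refine ⟨Walk.cons (by simpa [K5] using h) Walk.nil, ?_⟩
      simp only [Walk.support_cons, Walk.support_nil, List.mem_cons, List.mem_singleton]
      rintro (rfl | rfl | h') <;> simp_all

lemma K33_adj_lr (i j : Fin 3) : K33.Adj (Sum.inl i) (Sum.inr j) := by simp [K33]

lemma noSep1_K33 : NoSep1 K33 := by
  constructor
  · intro x y
    cases x with
    | inl i => cases y with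
      | inl j => exact (K33_adj_lr i 0).reachable.trans ((K33_adj_lr j 0).symm.reachable)
      | inr j => exact (K33_adj_lr i j).reachable
    | inr i => cases y with
      | inl j => exact (K33_adj_lr j i).symm.reachable
      | inr j => exact ((K33_adj_lr 0 i).symm.reachable).trans (K33_adj_lr 0 j).reachable
  · intro c x y hxc hyc
    by_cases hxy : x = y
    · subst hxy; exact ⟨Walk.nil, by simpa using fun h' => hxc h'.symm⟩
    cases x with
    | inl i => cases y with
      | inl j =>
        obtain ⟨k, hk, -⟩ := exists_inr_ne c c
        refine ⟨Walk.cons (K33_adj_lr i k) (Walk.cons (K33_adj_lr j k).symm Walk.nil), ?_⟩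
        simp only [Walk.support_cons, Walk.support_nil, List.mem_cons, List.mem_singleton]
        rintro (rfl | rfl | rfl | h') <;> simp_all
      | inr j =>
        refine ⟨Walk.cons (K33_adj_lr i j) Walk.nil, ?_⟩
        simp only [Walk.support_cons, Walk.support_nil, List.mem_cons, List.mem_singleton]
        rintro (rfl | rfl | h') <;> simp_all
    | inr i => cases y with
      | inl j =>
        refine ⟨Walk.cons (K33_adj_lr j i).symm Walk.nil, ?_⟩
        simp only [Walk.support_cons, Walk.support_nil, List.mem_cons, List.mem_singleton]
        rintro (rfl | rfl | h') <;> simp_all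
      | inr j =>
        obtain ⟨k, hk, -⟩ := exists_inl_ne c c
        refine ⟨Walk.cons (K33_adj_lr k i).symm (Walk.cons (K33_adj_lr k j) Walk.nil), ?_⟩
        simp only [Walk.support_cons, Walk.support_nil, List.mem_cons, List.mem_singleton]
        rintro (rfl | rfl | rfl | h') <;> simp_all

lemma sepProp_K5 : SepProp K5 := by
  intro a b hab S1 S2 hpart hdisj h1 h2 hsep
  obtain ⟨x, hx⟩ := h1
  obtain ⟨y, hy⟩ := h2
  have hxy : x ≠ y := fun h => (Set.disjoint_left.mp hdisj hx) (h ▸ hy)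
  exact absurd (by simpa [K5] using hxy : K5.Adj x y) (hsep x hx y hy)

lemma sepProp_K33 : SepProp K33 := by
  intro a b hab S1 S2 hpart hdisj h1 h2 hsep
  exfalso
  obtain ⟨x, hx⟩ := h1
  obtain ⟨y, hy⟩ := h2
  have hmem : ∀ z : Fin 3 ⊕ Fin 3, z ≠ a → z ≠ b → z ∈ S1 ∨ z ∈ S2 := by
    intro z hza hzb
    have : z ∈ S1 ∪ S2 := by rw [hpart]; exact ⟨hza, hzb⟩
    exact this
  cases x with
  | inl i => cases y with
    | inl j =>
      obtain ⟨k, hka, hkb⟩ := exists_inr_ne a b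
      rcases hmem _ hka hkb with hk | hk
      · exact hsep _ hk _ hy (K33_adj_lr j k).symm
      · exact hsep _ hx _ hk (K33_adj_lr i k)
    | inr j => exact hsep _ hx _ hy (K33_adj_lr i j)
  | inr i => cases y with
    | inl j => exact hsep _ hx _ hy (K33_adj_lr j i).symm
    | inr j =>
      obtain ⟨k, hka, hkb⟩ := exists_inl_ne a b
      rcases hmem _ hka hkb with hk | hk
      · exact hsep _ hk _ hy (K33_adj_lr k j)
      · exact hsep _ hx _ hk (K33_adj_lr k i).symm

lemma inv_K5 : GoodG K5 := ⟨minDeg2_K5, noSep1_K5, sepProp_K5⟩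
lemma inv_K33 : GoodG K33 := ⟨minDeg2_K33, noSep1_K33, sepProp_K33⟩

/- ### transport along isomorphism -/

lemma inducedIsPath_iso {V W : Type} {G : SimpleGraph V} {H : SimpleGraph W} (e : G ≃g H)
    {S : Set W} {a b : W} (h : InducedIsPath H S a b) :
    InducedIsPath G ((e : V → W) ⁻¹' S) (e.symm a) (e.symm b) := by
  obtain ⟨p, hp, hsup, hadj⟩ := h
  refine ⟨p.map e.symm.toHom, Walk.map_isPath_of_injective e.symm.injective hp, ?_, ?_⟩
  · intro z
    rw [Walk.support_map, List.mem_map, Set.mem_preimage]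
    constructor
    · rintro ⟨w, hw, rfl⟩
      simpa using (hsup w).mp hw
    · intro hz
      exact ⟨e z, (hsup (e z)).mpr hz, by simp⟩
  · intro x y hx hy
    rw [Set.mem_preimage] at hx hy
    have h1 : G.Adj x y ↔ H.Adj (e x) (e y) := (Iso.map_adj_iff e).symm
    rw [h1, hadj _ _ hx hy, Walk.edges_map]
    constructor
    · intro hmem
      refine List.mem_map.mpr ⟨s(e x, e y), hmem, ?_⟩
      simp [Sym2.map_pair_eq]
    · intro hmem
      obtain ⟨ed, hed, hed2⟩ := List.mem_map.mp hmem
      have h3 := congrArg (Sym2.map (e : V → W)) hed2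
      rw [Sym2.map_map, Sym2.map_pair_eq] at h3
      have h5 : ((e : V → W) ∘ (⇑e.symm.toHom : W → V)) = id := by funext w; simp
      rw [h5, Sym2.map_id, id_eq] at h3
      exact h3 ▸ hed
    
lemma minDeg2_iso {V W : Type} {G : SimpleGraph V} {H : SimpleGraph W} (e : G ≃g H)
    (hH : MinDeg2 H) : MinDeg2 G := by
  intro x
  obtain ⟨y, z, hyz, hy, hz⟩ := hH (e x)
  refine ⟨e.symm y, e.symm z, fun hc => hyz (e.symm.injective hc), ?_, ?_⟩
  · have := e.symm.map_adj_iff.mpr hy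
    simpa using this
  · have := e.symm.map_adj_iff.mpr hz
    simpa using this

lemma noSep1_iso {V W : Type} {G : SimpleGraph V} {H : SimpleGraph W} (e : G ≃g H)
    (hH : NoSep1 H) : NoSep1 G := by
  constructor
  · intro x y
    have := (hH.1 (e x) (e y)).map e.symm.toHom
    simpa using this
  · intro c x y hxc hyc
    obtain ⟨p, hp⟩ := hH.2 (e c) (e x) (e y)
      (fun hc => hxc (e.injective hc)) (fun hc => hyc (e.injective hc))
    refine ⟨(p.map e.symm.toHom).copy (by simp) (by simp), ?_⟩
    rw [Walk.support_copy, Walk.support_map, List.mem_map]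
    rintro ⟨w, hw, hwc⟩
    have h6 : w = e c := by
      have := congrArg (e : V → W) hwc
      simpa using this
    exact hp (h6 ▸ hw)

lemma sepProp_iso {V W : Type} {G : SimpleGraph V} {H : SimpleGraph W} (e : G ≃g H)
    (hH : SepProp H) : SepProp G := by
  intro a b hab S1 S2 hpart hdisj h1 h2 hsep
  have hab' : (e a : W) ≠ e b := fun hc => hab (e.injective hc)
  have key := hH (e a) (e b) hab'
    ((e.symm : W → V) ⁻¹' S1) ((e.symm : W → V) ⁻¹' S2) ?_ ?_ ?_ ?_ ?_
  · rcases key with key | key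
    · left
      have h3 := inducedIsPath_iso e key
      have h4 : (e : V → W) ⁻¹' ((e.symm : W → V) ⁻¹' S1 ∪ {e a, e b}) = S1 ∪ {a, b} := by
        ext z
        simp only [Set.mem_preimage, Set.mem_union, Set.mem_insert_iff, Set.mem_singleton_iff]
        constructor
        · rintro (hz | hz | hz)
          · left; simpa using hz
          · right; left; exact e.injective hz
          · right; right; exact e.injective hz
        · rintro (hz | rfl | rfl)
          · left; simpa using hz
          · right; left; rfl
          · right; right; rfl
      rw [h4] at h3
      simpa using h3
    · right
      have h3 := inducedIsPath_iso e key
      have h4 : (e : V → W) ⁻¹' ((e.symm : W → V) ⁻¹' S2 ∪ {e a, e b}) = S2 ∪ {a, b} := by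
        ext z
        simp only [Set.mem_preimage, Set.mem_union, Set.mem_insert_iff, Set.mem_singleton_iff]
        constructor
        · rintro (hz | hz | hz)
          · left; simpa using hz
          · right; left; exact e.injective hz
          · right; right; exact e.injective hz
        · rintro (hz | rfl | rfl)
          · left; simpa using hz
          · right; left; rfl
          · right; right; rfl
      rw [h4] at h3
      simpa using h3
  · ext z
    simp only [Set.mem_union, Set.mem_preimage, Set.mem_setOf_eq]
    have hz := Set.ext_iff.mp hpart (e.symm z)
    simp only [Set.mem_union, Set.mem_setOf_eq] at hz
    rw [hz]
    constructor
    · rintro ⟨hz1, hz2⟩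
      exact ⟨fun hc => hz1 (by rw [hc]; simp), fun hc => hz2 (by rw [hc]; simp)⟩
    · rintro ⟨hz1, hz2⟩
      refine ⟨fun hc => hz1 ?_, fun hc => hz2 ?_⟩
      · have := congrArg (e : V → W) hc; simpa using this
      · have := congrArg (e : V → W) hc; simpa using this
  · exact Disjoint.preimage _ hdisj
  · obtain ⟨x, hx⟩ := h1
    exact ⟨e x, by simpa using hx⟩
  · obtain ⟨x, hx⟩ := h2
    exact ⟨e x, by simpa using hx⟩
  · intro x hx y hy hadj
    rw [Set.mem_preimage] at hx hy
    have : G.Adj (e.symm x) (e.symm y) := by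
      have := e.symm.map_adj_iff.mpr hadj
      simpa using this
    exact hsep _ hx _ hy this

lemma goodG_iso {V W : Type} {G : SimpleGraph V} {H : SimpleGraph W} (e : G ≃g H)
    (hH : GoodG H) : GoodG G :=
  ⟨minDeg2_iso e hH.1, noSep1_iso e hH.2.1, sepProp_iso e hH.2.2⟩

/- ### preservation under subdivision: MinDeg2, NoSep1 -/

section Preserve
variable {V : Type} {K : SimpleGraph V} {u v : V}

lemma minDeg2_sub (huv : K.Adj u v) (hmd : MinDeg2 K) : MinDeg2 (SubdivideEdge K u v) := by
  intro x
  cases x with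
  | none =>
    exact ⟨some u, some v, by simpa using huv.ne,
      sub_adj_none_some (Or.inl rfl), sub_adj_none_some (Or.inr rfl)⟩
  | some x' =>
    obtain ⟨y, z, hyz, hy, hz⟩ := hmd x'
    by_cases hyuv : s(x', y) = s(u, v) <;> by_cases hzuv : s(x', z) = s(u, v)
    · exfalso
      have h3 := hyuv.trans hzuv.symm
      rcases Sym2.eq_iff.mp h3 with ⟨-, h5⟩ | ⟨h4, h5⟩
      · exact hyz h5
      · exact K.loopless.irrefl x' (h5 ▸ hy)
    · refine ⟨none, some z, by simp, sub_adj_some_none ?_, sub_adj_some_some.mpr ⟨hz, hzuv⟩⟩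
      rcases Sym2.eq_iff.mp hyuv with ⟨h4, -⟩ | ⟨h4, -⟩
      · exact Or.inl h4
      · exact Or.inr h4
    · refine ⟨none, some y, by simp, sub_adj_some_none ?_, sub_adj_some_some.mpr ⟨hy, hyuv⟩⟩
      rcases Sym2.eq_iff.mp hzuv with ⟨h4, -⟩ | ⟨h4, -⟩
      · exact Or.inl h4
      · exact Or.inr h4
    · exact ⟨some y, some z, by simpa using hyz,
        sub_adj_some_some.mpr ⟨hy, hyuv⟩, sub_adj_some_some.mpr ⟨hz, hzuv⟩⟩

lemma exists_walk_avoid_uv (huv : K.Adj u v) (hmd : MinDeg2 K) (hns : NoSep1 K) (x y : V) :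
    ∃ p : K.Walk x y, s(u, v) ∉ p.edges := by
  have special : ∃ p : K.Walk u v, s(u, v) ∉ p.edges := by
    obtain ⟨y1, y2, hne, h1, h2⟩ := hmd u
    obtain ⟨z, hz1, hz2⟩ : ∃ z, K.Adj u z ∧ z ≠ v := by
      by_cases hy1 : y1 = v
      · refine ⟨y2, h2, fun h => hne (hy1.trans h.symm)⟩
      · exact ⟨y1, h1, hy1⟩
    obtain ⟨q, hq⟩ := hns.2 u z v hz1.ne' huv.ne'
    refine ⟨Walk.cons hz1 q, ?_⟩
    simp only [Walk.edges_cons, List.mem_cons]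
    rintro (h | h)
    · rcases Sym2.eq_iff.mp h with ⟨-, h5⟩ | ⟨h4, h5⟩
      · exact hz2 h5.symm
      · exact huv.ne' h5
    · exact hq (q.fst_mem_support_of_mem_edges h)
  by_cases hxv : x = v
  · by_cases hyv : y = v
    · exact ⟨(Walk.nil' v).copy hxv.symm hyv.symm, by simp⟩
    · by_cases hyu : y = u
      · obtain ⟨p, hp⟩ := special
        exact ⟨p.reverse.copy hxv.symm hyu.symm, by simpa using hp⟩
      · obtain ⟨p, hp⟩ := hns.2 u x y (by rw [hxv]; exact huv.ne') hyu
        exact ⟨p, fun h => hp (p.fst_mem_support_of_mem_edges h)⟩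
  · by_cases hyv : y = v
    · by_cases hxu : x = u
      · obtain ⟨p, hp⟩ := special
        exact ⟨p.copy hxu.symm hyv.symm, by simpa using hp⟩
      · obtain ⟨p, hp⟩ := hns.2 u x y hxu (by rw [hyv]; exact huv.ne')
        exact ⟨p, fun h => hp (p.fst_mem_support_of_mem_edges h)⟩
    · obtain ⟨p, hp⟩ := hns.2 v x y hxv hyv
      exact ⟨p, fun h => hp (p.snd_mem_support_of_mem_edges h)⟩

lemma noSep1_sub (huv : K.Adj u v) (hmd : MinDeg2 K) (hns : NoSep1 K) :
    NoSep1 (SubdivideEdge K u v) := by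
  constructor
  · have lift_reach : ∀ a b : V, (SubdivideEdge K u v).Reachable (some a) (some b) := by
      intro a b
      obtain ⟨p⟩ := hns.1 a b
      exact ⟨liftWalk K u v p⟩
    intro x y
    cases x with
    | none => cases y with
      | none => exact Reachable.refl _
      | some y' => exact (sub_adj_none_some (u := u) (Or.inl rfl)).reachable.trans (lift_reach u y')
    | some x' => cases y with
      | none => exact (lift_reach x' u).trans (sub_adj_some_none (Or.inl rfl)).reachable
      | some y' => exact lift_reach x' y'
  · intro c x y hxc hyc
    by_cases hxy : x = y
    · subst hxy; exact ⟨Walk.nil, by simpa using fun h => hxc h.symm⟩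
    cases c with
    | none =>
      cases x with
      | none => exact absurd rfl hxc
      | some x' => cases y with
        | none => exact absurd rfl hyc
        | some y' =>
          obtain ⟨p, hp⟩ := exists_walk_avoid_uv huv hmd hns x' y'
          exact ⟨liftWalk K u v p, by rwa [liftWalk_none_mem_support]⟩
    | some c' =>
      obtain ⟨n, hn1, hn2⟩ : ∃ n, (n = u ∨ n = v) ∧ n ≠ c' := by
        by_cases hcu : c' = u
        · exact ⟨v, Or.inr rfl, fun h => huv.ne' (h.trans hcu)⟩
        · exact ⟨u, Or.inl rfl, fun h => hcu h.symm⟩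
      have main : ∀ x' y' : V, x' ≠ c' → y' ≠ c' →
          ∃ p : (SubdivideEdge K u v).Walk (some x') (some y'), some c' ∉ p.support := by
        intro x' y' hx hy
        obtain ⟨p, hp⟩ := hns.2 c' x' y' hx hy
        exact ⟨liftWalk K u v p, by rw [liftWalk_mem_support_some]; exact hp⟩
      have mainN : ∀ y' : V, y' ≠ c' →
          ∃ p : (SubdivideEdge K u v).Walk none (some y'), some c' ∉ p.support := by
        intro y' hy
        by_cases hyn : y' = n
        · subst hyn
          refine ⟨Walk.cons (sub_adj_none_some hn1) Walk.nil, ?_⟩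
          simp only [Walk.support_cons, Walk.support_nil, List.mem_cons, List.mem_singleton]
          rintro (h | h | h)
          · simp at h
          · exact hn2 (Option.some_injective V h).symm
          · simp at h
        · obtain ⟨p, hp⟩ := hns.2 c' n y' hn2 hy
          refine ⟨Walk.cons (sub_adj_none_some hn1) (liftWalk K u v p), ?_⟩
          simp only [Walk.support_cons, List.mem_cons]
          rintro (h | h)
          · simp at h
          · rw [liftWalk_mem_support_some] at h; exact hp h
      cases x with
      | none => cases y with
        | none => exact absurd rfl hxy
        | some y' => exact mainN y' (fun h => hyc (by rw [h]))
      | some x' => cases y with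
        | none =>
          obtain ⟨p, hp⟩ := mainN x' (fun h => hxc (by rw [h]))
          exact ⟨p.reverse, by simpa using hp⟩
        | some y' =>
          exact main x' y' (fun h => hxc (by rw [h])) (fun h => hyc (by rw [h]))

end Preserve

/- ### preservation of SepProp: case B (a = none) -/

section Monster
variable {V : Type} {K : SimpleGraph V} {u v : V}

lemma mem_edges_swap {W : Type} {G : SimpleGraph W} {a b x y : W} {p : G.Walk a b}
    (h : s(y, x) ∈ p.edges) : s(x, y) ∈ p.edges := by rwa [Sym2.eq_swap]

lemma sepB_false (huv : K.Adj u v) (hns : NoSep1 K) {b' : V} {T1 T2 : Set (Option V)}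
    (hpart : T1 ∪ T2 = {z | z ≠ none ∧ z ≠ some b'}) (hdisj : Disjoint T1 T2)
    (h2 : T2.Nonempty)
    (hsep : ∀ x ∈ T1, ∀ y ∈ T2, ¬ (SubdivideEdge K u v).Adj x y)
    (hu : some u ∉ T2) (hv : some v ∉ T2) : False := by
  have hsub : ∀ z ∈ T1 ∪ T2, z ≠ (none : Option V) ∧ z ≠ some b' :=
    fun z hz => (Set.ext_iff.mp hpart z).mp hz
  have hmem : ∀ z : Option V, z ≠ none → z ≠ some b' → z ∈ T1 ∪ T2 :=
    fun z h1 h2' => (Set.ext_iff.mp hpart z).mpr ⟨h1, h2'⟩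
  obtain ⟨t, ht⟩ := h2
  obtain ⟨t', rfl⟩ : ∃ t', t = some t' := by
    cases t with
    | none => exact absurd rfl (hsub _ (Or.inr ht)).1
    | some t' => exact ⟨t', rfl⟩
  have htb : t' ≠ b' := fun h => (hsub _ (Or.inr ht)).2 (by rw [h])
  obtain ⟨m, hm1, hm2⟩ : ∃ m, (m = u ∨ m = v) ∧ m ≠ b' := by
    by_cases hub : u = b'
    · refine ⟨v, Or.inr rfl, fun h => huv.ne (hub ▸ h ▸ rfl)⟩
    · exact ⟨u, Or.inl rfl, hub⟩
  have hmT2 : some m ∉ T2 := by rcases hm1 with rfl | rfl; exacts [hu, hv]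
  obtain ⟨p, hp⟩ := hns.2 b' t' m htb hm2
  obtain ⟨d, hd, hd1, hd2⟩ := p.exists_boundary_dart {z : V | some z ∈ T2} ht hmT2
  have hdsnd : d.toProd.2 ∈ p.support := p.dart_snd_mem_support_of_mem_darts hd
  have hsndb : d.toProd.2 ≠ b' := fun h => hp (h ▸ hdsnd)
  have hsndT1 : some d.toProd.2 ∈ T1 := by
    rcases hmem (some d.toProd.2) (by simp) (fun h => hsndb (Option.some_injective V h)) with h | h
    · exact h
    · exact absurd h hd2
  have hadj : (SubdivideEdge K u v).Adj (some d.toProd.1) (some d.toProd.2) := by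
    refine sub_adj_some_some.mpr ⟨d.adj, fun hc => ?_⟩
    rcases Sym2.eq_iff.mp hc with ⟨h3, h4⟩ | ⟨h3, h4⟩
    · exact hu (h3 ▸ hd1)
    · exact hv (h3 ▸ hd1)
  exact hsep _ hsndT1 _ hd1 hadj.symm

lemma sepB_core (huv : K.Adj u v) (hK : GoodG K) {b' : V} {T1 T2 : Set (Option V)}
    (hab : (none : Option V) ≠ some b')
    (hpart : T1 ∪ T2 = {z | z ≠ none ∧ z ≠ some b'}) (hdisj : Disjoint T1 T2)
    (hsep : ∀ x ∈ T1, ∀ y ∈ T2, ¬ (SubdivideEdge K u v).Adj x y)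
    (hu1 : some u ∈ T1) (hv2 : some v ∈ T2) :
    InducedIsPath (SubdivideEdge K u v) (T1 ∪ {none, some b'}) none (some b') ∨
    InducedIsPath (SubdivideEdge K u v) (T2 ∪ {none, some b'}) none (some b') := by
  have hsub : ∀ z ∈ T1 ∪ T2, z ≠ (none : Option V) ∧ z ≠ some b' :=
    fun z hz => (Set.ext_iff.mp hpart z).mp hz
  have hmem : ∀ z : Option V, z ≠ none → z ≠ some b' → z ∈ T1 ∪ T2 :=
    fun z h1 h2' => (Set.ext_iff.mp hpart z).mpr ⟨h1, h2'⟩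
  have hub' : u ≠ b' := fun h => (hsub _ (Or.inl hu1)).2 (by rw [h])
  have hvb' : v ≠ b' := fun h => (hsub _ (Or.inr hv2)).2 (by rw [h])
  have huvT : some u ∉ T2 := fun h => Set.disjoint_left.mp hdisj hu1 h
  have hvuT : some v ∉ T1 := fun h => Set.disjoint_left.mp hdisj h hv2
  by_cases hS1e : ∃ z : V, some z ∈ T1 ∧ z ≠ u
  · -- nondegenerate
    set S1 : Set V := {z : V | some z ∈ T1 ∧ z ≠ u} with hS1def
    set S2 : Set V := {z : V | some z ∈ T2} with hS2def
    have hcov : S1 ∪ S2 = {z : V | z ≠ u ∧ z ≠ b'} := by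
      ext z
      simp only [Set.mem_union, Set.mem_setOf_eq, hS1def, hS2def]
      constructor
      · rintro (⟨hz, hzu⟩ | hz)
        · exact ⟨hzu, fun hc => (hsub _ (Or.inl hz)).2 (by rw [hc])⟩
        · refine ⟨fun hc => huvT (hc ▸ hz), fun hc => (hsub _ (Or.inr hz)).2 (by rw [hc])⟩
      · rintro ⟨hzu, hzb⟩
        rcases hmem (some z) (by simp) (fun hc => hzb (Option.some_injective V hc)) with h | h
        · exact Or.inl ⟨h, hzu⟩
        · exact Or.inr h
    have hdisj' : Disjoint S1 S2 := by
      rw [Set.disjoint_left]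
      rintro z ⟨hz, -⟩ hz2
      exact Set.disjoint_left.mp hdisj hz hz2
    have hsep' : ∀ x ∈ S1, ∀ y ∈ S2, ¬ K.Adj x y := by
      rintro x ⟨hx1, hxu⟩ y hy2 hadj
      by_cases hc : s(x, y) = s(u, v)
      · rcases Sym2.eq_iff.mp hc with ⟨h3, h4⟩ | ⟨h3, h4⟩
        · exact hxu h3
        · exact huvT (h4 ▸ hy2)
      · exact hsep _ hx1 _ hy2 (sub_adj_some_some.mpr ⟨hadj, hc⟩)
    rcases hK.2.2 u b' hub' S1 S2 hcov hdisj' hS1e ⟨v, hv2⟩ hsep'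
      with ⟨p, hp, hsup, hedge⟩ | ⟨p, hp, hsup, hedge⟩
    · -- path on S1 ∪ {u, b'}; conclusion: left
      have hvp : v ∉ p.support := by
        intro h
        rcases (hsup v).mp h with ⟨hz, -⟩ | hz
        · exact hvuT hz
        · rcases hz with hz | hz
          · exact huv.ne' hz
          · exact hvb' hz
      have hpe : s(u, v) ∉ p.edges := fun h => hvp (p.snd_mem_support_of_mem_edges h)
      have hnone : (none : Option V) ∉ (liftWalk K u v p).support := by
        rw [liftWalk_none_mem_support]; exact hpe
      refine Or.inl (mkInduced
        (Walk.cons (sub_adj_none_some (Or.inl rfl)) (liftWalk K u v p))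
        (Walk.IsPath.cons (liftWalk_isPath hp) hnone) ?_ ?_)
      · intro z
        cases z with
        | none =>
          exact iff_of_true (by simp) (Or.inr (Or.inl rfl))
        | some z' =>
          simp only [Walk.support_cons, List.mem_cons, liftWalk_mem_support_some]
          constructor
          · rintro (h | h)
            · simp at h
            · rcases (hsup z').mp h with ⟨hz, -⟩ | hz
              · exact Or.inl hz
              · rcases hz with rfl | rfl
                · exact Or.inl hu1
                · exact Or.inr (Or.inr rfl)
          · rintro (h | h)
            · by_cases hzu : z' = u
              · exact Or.inr ((hsup z').mpr (Or.inr (Or.inl hzu)))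
              · exact Or.inr ((hsup z').mpr (Or.inl ⟨h, hzu⟩))
            · rcases h with h | h
              · simp at h
              · rw [Option.some_injective V h]
                exact Or.inr ((hsup b').mpr (Or.inr (Or.inr rfl)))
      · intro x y hx hy hadj
        have memtr : ∀ z' : V, some z' ∈ T1 ∪ {none, some b'} → z' ∈ S1 ∪ {u, b'} := by
          intro z' hz
          rcases hz with hz | hz
          · by_cases hzu : z' = u
            · exact Or.inr (Or.inl hzu)
            · exact Or.inl ⟨hz, hzu⟩
          · rcases hz with hz | hz
            · simp at hz
            · exact Or.inr (Or.inr (Option.some_injective V hz))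
        have hedge' : ∀ x' y' : V, some x' ∈ T1 ∪ {none, some b'} → some y' ∈ T1 ∪ {none, some b'} →
            (SubdivideEdge K u v).Adj (some x') (some y') →
            s(some x', some y') ∈ (Walk.cons (sub_adj_none_some (u := u) (v := v) (Or.inl rfl))
              (liftWalk K u v p)).edges := by
          intro x' y' hx' hy' hadj'
          obtain ⟨hk, hne⟩ := sub_adj_some_some.mp hadj'
          simp only [Walk.edges_cons, List.mem_cons]
          exact Or.inr ((liftWalk_edge_some_some p).mpr
            ⟨(hedge x' y' (memtr x' hx') (memtr y' hy')).mp hk, hne⟩)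
        have hnonecase : ∀ y' : V, some y' ∈ T1 ∪ {none, some b'} →
            (SubdivideEdge K u v).Adj none (some y') →
            s((none : Option V), some y') ∈ (Walk.cons (sub_adj_none_some (u := u) (v := v) (Or.inl rfl))
              (liftWalk K u v p)).edges := by
          intro y' hy' hadj'
          rcases sub_adj_none_iff.mp hadj' with h | h
          · rw [h]
            simp
          · exfalso
            rw [Option.some_injective V h] at hy'
            rcases hy' with hz | hz
            · exact hvuT hz
            · rcases hz with hz | hz
              · simp at hz
              · exact hvb' (Option.some_injective V hz)
        cases x with
        | none =>
          cases y with
          | none => exact ((SubdivideEdge K u v).loopless.irrefl _ hadj).elim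
          | some y' => exact hnonecase y' hy hadj
        | some x' =>
          cases y with
          | none => exact mem_edges_swap (hnonecase x' hx hadj.symm)
          | some y' => exact hedge' x' y' hx hy hadj
    · -- path on S2 ∪ {u, b'}; conclusion: right
      have hue : s(u, v) ∈ p.edges :=
        (hedge u v (Or.inr (Or.inl rfl)) (Or.inl hv2)).mp huv
      obtain ⟨hadj0, q, rfl⟩ := first_edge p hp hue
      rw [Walk.cons_isPath_iff] at hp
      have hqsup : ∀ z, z ∈ q.support ↔ z ∈ S2 ∪ {b'} := by
        intro z
        constructor
        · intro h
          have hz := (hsup z).mp (by simp [h])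
          rcases hz with hz | hz
          · exact Or.inl hz
          · rcases hz with rfl | rfl
            · exact absurd h hp.2
            · exact Or.inr rfl
        · intro h
          have hz : z ∈ S2 ∪ {u, b'} := by
            rcases h with h | h
            · exact Or.inl h
            · exact Or.inr (Or.inr h)
          have := (hsup z).mpr hz
          simp only [Walk.support_cons, List.mem_cons] at this
          rcases this with rfl | h'
          · exfalso
            rcases h with h | h
            · exact huvT h
            · exact hub' h
          · exact h'
      have hqe : s(u, v) ∉ q.edges := fun h => hp.2 (q.fst_mem_support_of_mem_edges h)
      have hnone : (none : Option V) ∉ (liftWalk K u v q).support := by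
        rw [liftWalk_none_mem_support]; exact hqe
      refine Or.inr (mkInduced
        (Walk.cons (sub_adj_none_some (Or.inr rfl)) (liftWalk K u v q))
        (Walk.IsPath.cons (liftWalk_isPath hp.1) hnone) ?_ ?_)
      · intro z
        cases z with
        | none =>
          exact iff_of_true (by simp) (Or.inr (Or.inl rfl))
        | some z' =>
          simp only [Walk.support_cons, List.mem_cons, liftWalk_mem_support_some]
          constructor
          · rintro (h | h)
            · simp at h
            · rcases (hqsup z').mp h with hz | hz
              · exact Or.inl hz
              · have hz' : z' = b' := hz
                exact Or.inr (Or.inr (by simp [hz']))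
          · rintro (h | h)
            · exact Or.inr ((hqsup z').mpr (Or.inl h))
            · rcases h with h | h
              · simp at h
              · rw [Option.some_injective V h]
                exact Or.inr ((hqsup b').mpr (Or.inr rfl))
      · intro x y hx hy hadj
        have memtr : ∀ z' : V, some z' ∈ T2 ∪ {none, some b'} → z' ∈ S2 ∪ {b'} := by
          intro z' hz
          rcases hz with hz | hz
          · exact Or.inl hz
          · rcases hz with hz | hz
            · simp at hz
            · exact Or.inr (Option.some_injective V hz)
        have hedge' : ∀ x' y' : V, some x' ∈ T2 ∪ {none, some b'} → some y' ∈ T2 ∪ {none, some b'} →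
            (SubdivideEdge K u v).Adj (some x') (some y') →
            s(some x', some y') ∈ (Walk.cons (sub_adj_none_some (u := u) (v := v) (Or.inr rfl))
              (liftWalk K u v q)).edges := by
          intro x' y' hx' hy' hadj'
          obtain ⟨hk, hne⟩ := sub_adj_some_some.mp hadj'
          have hx2 : x' ∈ S2 ∪ {u, b'} := by
            rcases memtr x' hx' with h | h
            · exact Or.inl h
            · exact Or.inr (Or.inr h)
          have hy2 : y' ∈ S2 ∪ {u, b'} := by
            rcases memtr y' hy' with h | h
            · exact Or.inl h
            · exact Or.inr (Or.inr h)
          have hmemq : s(x', y') ∈ (Walk.cons hadj0 q).edges := (hedge x' y' hx2 hy2).mp hk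
          simp only [Walk.edges_cons, List.mem_cons] at hmemq
          rcases hmemq with hmemq | hmemq
          · exfalso
            rcases Sym2.eq_iff.mp hmemq with ⟨h3, -⟩ | ⟨-, h4⟩
            · rcases memtr x' hx' with h | h
              · exact huvT (h3 ▸ h)
              · exact hub' (h3 ▸ h)
            · rcases memtr y' hy' with h | h
              · exact huvT (h4 ▸ h)
              · exact hub' (h4 ▸ h)
          · simp only [Walk.edges_cons, List.mem_cons]
            exact Or.inr ((liftWalk_edge_some_some q).mpr ⟨hmemq, hne⟩)
        have hnonecase : ∀ y' : V, some y' ∈ T2 ∪ {none, some b'} →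
            (SubdivideEdge K u v).Adj none (some y') →
            s((none : Option V), some y') ∈ (Walk.cons (sub_adj_none_some (u := u) (v := v) (Or.inr rfl))
              (liftWalk K u v q)).edges := by
          intro y' hy' hadj'
          rcases sub_adj_none_iff.mp hadj' with h | h
          · exfalso
            rw [Option.some_injective V h] at hy'
            rcases hy' with hz | hz
            · exact huvT hz
            · rcases hz with hz | hz
              · simp at hz
              · exact hub' (Option.some_injective V hz)
          · rw [h]
            simp
        cases x with
        | none =>
          cases y with
          | none => exact ((SubdivideEdge K u v).loopless.irrefl _ hadj).elim
          | some y' => exact hnonecase y' hy hadj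
        | some x' =>
          cases y with
          | none => exact mem_edges_swap (hnonecase x' hx hadj.symm)
          | some y' => exact hedge' x' y' hx hy hadj
  · -- degenerate: T1 = {some u}
    have hT1 : ∀ z ∈ T1, z = some u := by
      intro z hz
      cases z with
      | none => exact absurd rfl (hsub _ (Or.inl hz)).1
      | some z' =>
        by_contra hzz
        exact hS1e ⟨z', hz, fun h => hzz (by rw [h])⟩
    have hKadjub : K.Adj u b' := by
      obtain ⟨y, z, hyz, hy, hz⟩ := hK.1 u
      have hforce : ∀ w, K.Adj u w → w = v ∨ w = b' := by
        intro w hw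
        by_cases hwv : w = v
        · exact Or.inl hwv
        have hne : s(u, w) ≠ s(u, v) := by
          intro hc
          rcases Sym2.eq_iff.mp hc with ⟨-, h4⟩ | ⟨h3, -⟩
          · exact hwv h4
          · exact huv.ne h3
        have hadj' : (SubdivideEdge K u v).Adj (some u) (some w) :=
          sub_adj_some_some.mpr ⟨hw, hne⟩
        by_cases hwb : some w = some b'
        · exact Or.inr (Option.some_injective V hwb)
        rcases hmem (some w) (by simp) hwb with h | h
        · have := hT1 _ h
          exact absurd (Option.some_injective V this) hw.ne'
        · exact absurd hadj' (hsep _ hu1 _ h)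
      rcases hforce y hy with rfl | rfl
      · rcases hforce z hz with rfl | rfl
        · exact absurd rfl hyz
        · exact hz
      · exact hy
    have hne2 : s(u, b') ≠ s(u, v) := by
      intro hc
      rcases Sym2.eq_iff.mp hc with ⟨-, h4⟩ | ⟨h3, -⟩
      · exact hvb' h4.symm
      · exact huv.ne h3
    have hnadj : ¬ (SubdivideEdge K u v).Adj none (some b') := by
      intro h
      rcases sub_adj_none_iff.mp h with h | h
      · exact hub' (Option.some_injective V h).symm
      · exact hvb' (Option.some_injective V h).symm
    have hpath := inducedIsPath_two (sub_adj_none_some (u := u) (v := v) (Or.inl rfl))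
      (sub_adj_some_some.mpr ⟨hKadjub, hne2⟩) hab hnadj
    have hseteq : T1 ∪ {none, some b'} = {(none : Option V), some u, some b'} := by
      ext z
      constructor
      · rintro (hz | hz)
        · exact Or.inr (Or.inl (hT1 _ hz))
        · rcases hz with hz | hz
          · exact Or.inl hz
          · exact Or.inr (Or.inr hz)
      · rintro (rfl | rfl | rfl)
        · exact Or.inr (Or.inl rfl)
        · exact Or.inl hu1
        · exact Or.inr (Or.inr rfl)
    rw [hseteq]
    exact Or.inl hpath

end Monster

section Monster2
variable {V : Type} {K : SimpleGraph V} {u v : V}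

lemma sepB (huv : K.Adj u v) (hK : GoodG K) {b : Option V}
    (hab : (none : Option V) ≠ b) {T1 T2 : Set (Option V)}
    (hpart : T1 ∪ T2 = {z | z ≠ none ∧ z ≠ b}) (hdisj : Disjoint T1 T2)
    (h1 : T1.Nonempty) (h2 : T2.Nonempty)
    (hsep : ∀ x ∈ T1, ∀ y ∈ T2, ¬ (SubdivideEdge K u v).Adj x y) :
    InducedIsPath (SubdivideEdge K u v) (T1 ∪ {none, b}) none b ∨
    InducedIsPath (SubdivideEdge K u v) (T2 ∪ {none, b}) none b := by
  obtain ⟨b', rfl⟩ : ∃ b', b = some b' := by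
    cases b with
    | none => exact absurd rfl hab
    | some b' => exact ⟨b', rfl⟩
  have hsub : ∀ z ∈ T1 ∪ T2, z ≠ (none : Option V) ∧ z ≠ some b' :=
    fun z hz => (Set.ext_iff.mp hpart z).mp hz
  have hmem : ∀ z : Option V, z ≠ none → z ≠ some b' → z ∈ T1 ∪ T2 :=
    fun z ha hb => (Set.ext_iff.mp hpart z).mpr ⟨ha, hb⟩
  have hsep2 : ∀ x ∈ T2, ∀ y ∈ T1, ¬ (SubdivideEdge K u v).Adj x y :=
    fun x hx y hy h => hsep y hy x hx h.symm
  have hpart2 : T2 ∪ T1 = {z : Option V | z ≠ none ∧ z ≠ some b'} := by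
    rw [Set.union_comm]; exact hpart
  have hbT1 : some b' ∉ T1 := fun h => (hsub _ (Or.inl h)).2 rfl
  have hbT2 : some b' ∉ T2 := fun h => (hsub _ (Or.inr h)).2 rfl
  have hu : some u ∈ T1 ∨ some u ∈ T2 ∨ u = b' := by
    by_cases h : some u = some b'
    · exact Or.inr (Or.inr (Option.some_injective V h))
    · rcases hmem (some u) (by simp) h with h' | h'
      · exact Or.inl h'
      · exact Or.inr (Or.inl h')
  have hv : some v ∈ T1 ∨ some v ∈ T2 ∨ v = b' := by
    by_cases h : some v = some b'
    · exact Or.inr (Or.inr (Option.some_injective V h))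
    · rcases hmem (some v) (by simp) h with h' | h'
      · exact Or.inl h'
      · exact Or.inr (Or.inl h')
  rcases hu with hu | hu | hu
  · rcases hv with hv | hv | hv
    · exact (sepB_false huv hK.2.1 hpart hdisj h2 hsep
        (fun h => Set.disjoint_left.mp hdisj hu h)
        (fun h => Set.disjoint_left.mp hdisj hv h)).elim
    · exact sepB_core huv hK hab hpart hdisj hsep hu hv
    · exact (sepB_false huv hK.2.1 hpart hdisj h2 hsep
        (fun h => Set.disjoint_left.mp hdisj hu h)
        (fun h => hbT2 (hv ▸ h))).elim
  · rcases hv with hv | hv | hv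
    · exact (sepB_core huv hK hab hpart2 hdisj.symm hsep2 hu hv).symm
    · exact (sepB_false huv hK.2.1 hpart2 hdisj.symm h1 hsep2
        (fun h => Set.disjoint_left.mp hdisj h hu)
        (fun h => Set.disjoint_left.mp hdisj h hv)).elim
    · exact (sepB_false huv hK.2.1 hpart2 hdisj.symm h1 hsep2
        (fun h => Set.disjoint_left.mp hdisj h hu)
        (fun h => hbT1 (hv ▸ h))).elim
  · rcases hv with hv | hv | hv
    · exact (sepB_false huv hK.2.1 hpart hdisj h2 hsep
        (fun h => hbT2 (hu ▸ h))
        (fun h => Set.disjoint_left.mp hdisj hv h)).elim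
    · exact (sepB_false huv hK.2.1 hpart2 hdisj.symm h1 hsep2
        (fun h => hbT1 (hu ▸ h))
        (fun h => Set.disjoint_left.mp hdisj h hv)).elim
    · exact absurd (hu.trans hv.symm) huv.ne

end Monster2

section Monster3
variable {V : Type} {K : SimpleGraph V} {u v : V}

lemma sepA (huv : K.Adj u v) (hK : GoodG K) {a b : Option V} (hab : a ≠ b)
    {T1 T2 : Set (Option V)}
    (hpart : T1 ∪ T2 = {z | z ≠ a ∧ z ≠ b}) (hdisj : Disjoint T1 T2)
    (h2 : T2.Nonempty)
    (hsep : ∀ x ∈ T1, ∀ y ∈ T2, ¬ (SubdivideEdge K u v).Adj x y)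
    (hw : none ∈ T1) :
    InducedIsPath (SubdivideEdge K u v) (T1 ∪ {a, b}) a b ∨
    InducedIsPath (SubdivideEdge K u v) (T2 ∪ {a, b}) a b := by
  have hsub : ∀ z ∈ T1 ∪ T2, z ≠ a ∧ z ≠ b :=
    fun z hz => (Set.ext_iff.mp hpart z).mp hz
  have hmem : ∀ z : Option V, z ≠ a → z ≠ b → z ∈ T1 ∪ T2 :=
    fun z ha hb => (Set.ext_iff.mp hpart z).mpr ⟨ha, hb⟩
  obtain ⟨a', rfl⟩ : ∃ a', a = some a' := by
    cases a with
    | none => exact absurd rfl ((hsub _ (Or.inl hw)).1).symm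
    | some a' => exact ⟨a', rfl⟩
  obtain ⟨b', rfl⟩ : ∃ b', b = some b' := by
    cases b with
    | none => exact absurd rfl ((hsub _ (Or.inl hw)).2).symm
    | some b' => exact ⟨b', rfl⟩
  have hab' : a' ≠ b' := fun h => hab (by rw [h])
  have hu' : some u ∈ T1 ∨ u = a' ∨ u = b' := by
    by_cases ha : some u = some a'
    · exact Or.inr (Or.inl (Option.some_injective V ha))
    by_cases hb : some u = some b'
    · exact Or.inr (Or.inr (Option.some_injective V hb))
    rcases hmem (some u) ha hb with h | h
    · exact Or.inl h
    · exact absurd (sub_adj_none_some (Or.inl rfl)) (hsep none hw (some u) h)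
  have hv' : some v ∈ T1 ∨ v = a' ∨ v = b' := by
    by_cases ha : some v = some a'
    · exact Or.inr (Or.inl (Option.some_injective V ha))
    by_cases hb : some v = some b'
    · exact Or.inr (Or.inr (Option.some_injective V hb))
    rcases hmem (some v) ha hb with h | h
    · exact Or.inl h
    · exact absurd (sub_adj_none_some (Or.inr rfl)) (hsep none hw (some v) h)
  by_cases hS1e : ∃ z : V, some z ∈ T1
  · -- nondegenerate
    set S1 : Set V := {z : V | some z ∈ T1} with hS1def
    set S2 : Set V := {z : V | some z ∈ T2} with hS2def
    have hcov : S1 ∪ S2 = {z : V | z ≠ a' ∧ z ≠ b'} := by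
      ext z
      simp only [Set.mem_union, Set.mem_setOf_eq, hS1def, hS2def]
      constructor
      · intro h
        have := hsub (some z) h
        exact ⟨fun hc => this.1 (by rw [hc]), fun hc => this.2 (by rw [hc])⟩
      · rintro ⟨hz1, hz2⟩
        exact hmem (some z) (fun hc => hz1 (Option.some_injective V hc))
          (fun hc => hz2 (Option.some_injective V hc))
    have hdisj' : Disjoint S1 S2 := by
      rw [Set.disjoint_left]
      rintro z hz hz2
      exact Set.disjoint_left.mp hdisj hz hz2
    have hne2 : S2.Nonempty := by
      obtain ⟨t, ht⟩ := h2
      cases t with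
      | none => exact absurd ht (Set.disjoint_left.mp hdisj hw)
      | some t' => exact ⟨t', ht⟩
    -- translations between option-level and V-level memberships
    have memtr1 : ∀ z : V, some z ∈ T1 ∪ {some a', some b'} ↔ z ∈ S1 ∪ {a', b'} := by
      intro z
      simp only [Set.mem_union, Set.mem_insert_iff, Set.mem_singleton_iff, Option.some.injEq]
      exact Iff.rfl
    have memtr2 : ∀ z : V, some z ∈ T2 ∪ {some a', some b'} ↔ z ∈ S2 ∪ {a', b'} := by
      intro z
      simp only [Set.mem_union, Set.mem_insert_iff, Set.mem_singleton_iff, Option.some.injEq]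
      exact Iff.rfl
    have huS : u ∈ S1 ∪ {a', b'} := by
      rcases hu' with h | h | h
      · exact Or.inl h
      · exact Or.inr (Or.inl h)
      · exact Or.inr (Or.inr h)
    have hvS : v ∈ S1 ∪ {a', b'} := by
      rcases hv' with h | h | h
      · exact Or.inl h
      · exact Or.inr (Or.inl h)
      · exact Or.inr (Or.inr h)
    have hsep' : ∀ x ∈ S1, ∀ y ∈ S2, ¬ K.Adj x y := by
      intro x hx y hy hadj
      by_cases hc : s(x, y) = s(u, v)
      · have hyuv : y = u ∨ y = v := by
          rcases Sym2.eq_iff.mp hc with ⟨-, h4⟩ | ⟨-, h4⟩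
          · exact Or.inr h4
          · exact Or.inl h4
        have hyT : some y ∈ T1 ∨ y = a' ∨ y = b' := by
          rcases hyuv with rfl | rfl
          · exact hu'
          · exact hv'
        rcases hyT with h | h | h
        · exact Set.disjoint_left.mp hdisj h hy
        · exact (hsub _ (Or.inr hy)).1 (by rw [h])
        · exact (hsub _ (Or.inr hy)).2 (by rw [h])
      · exact hsep _ hx _ hy (sub_adj_some_some.mpr ⟨hadj, hc⟩)
    rcases hK.2.2 a' b' hab' S1 S2 hcov hdisj' hS1e hne2 hsep'
      with ⟨p, hp, hsup, hedge⟩ | ⟨p, hp, hsup, hedge⟩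
    · -- S1 side: subdivided edge is inside; conclusion left
      have huve : s(u, v) ∈ p.edges := (hedge u v huS hvS).mp huv
      refine Or.inl (mkInduced (liftWalk K u v p) (liftWalk_isPath hp) ?_ ?_)
      · intro z
        cases z with
        | none =>
          exact iff_of_true ((liftWalk_none_mem_support p).mpr huve) (Or.inl hw)
        | some z' =>
          rw [liftWalk_mem_support_some]
          rw [hsup z']
          exact (memtr1 z').symm
      · intro x y hx hy hadj
        have hnonecase : ∀ y' : V, (SubdivideEdge K u v).Adj none (some y') →
            s((none : Option V), some y') ∈ (liftWalk K u v p).edges := by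
          intro y' hadj'
          refine (liftWalk_edge_none_some p).mpr ⟨?_, huve⟩
          rcases sub_adj_none_iff.mp hadj' with h | h
          · exact Or.inl (Option.some_injective V h)
          · exact Or.inr (Option.some_injective V h)
        cases x with
        | none =>
          cases y with
          | none => exact ((SubdivideEdge K u v).loopless.irrefl _ hadj).elim
          | some y' => exact hnonecase y' hadj
        | some x' =>
          cases y with
          | none => exact mem_edges_swap (hnonecase x' hadj.symm)
          | some y' =>
            obtain ⟨hk, hne⟩ := sub_adj_some_some.mp hadj
            exact (liftWalk_edge_some_some p).mpr
              ⟨(hedge x' y' ((memtr1 x').mp hx) ((memtr1 y').mp hy)).mp hk, hne⟩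
    · -- S2 side: subdivided edge untouched; conclusion right
      have hnT2 : ∀ z : V, z ∈ S2 → z ≠ a' ∧ z ≠ b' := by
        intro z hz
        have := hsub (some z) (Or.inr hz)
        exact ⟨fun hc => this.1 (by rw [hc]), fun hc => this.2 (by rw [hc])⟩
      have hUab : ∀ w' : V, w' ∈ S1 ∪ {a', b'} → w' ∈ p.support → w' = a' ∨ w' = b' := by
        intro w' hwS hws
        rcases (hsup w').mp hws with h | h
        · exact absurd h (by
            rcases hwS with h1 | h1
            · exact fun hh => Set.disjoint_left.mp hdisj' h1 hh
            · rcases h1 with rfl | rfl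
              · exact fun hh => (hnT2 _ hh).1 rfl
              · exact fun hh => (hnT2 _ hh).2 rfl)
        · exact h
      have huve : s(u, v) ∉ p.edges := by
        intro hmemuv
        have hu2 : u = a' ∨ u = b' :=
          hUab u huS (p.fst_mem_support_of_mem_edges hmemuv)
        have hv2 : v = a' ∨ v = b' :=
          hUab v hvS (p.snd_mem_support_of_mem_edges hmemuv)
        have hedgeab : s(a', b') ∈ p.edges := by
          rcases hu2 with rfl | rfl
          · rcases hv2 with rfl | rfl
            · exact absurd rfl huv.ne
            · exact hmemuv
          · rcases hv2 with rfl | rfl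
            · exact mem_edges_swap hmemuv
            · exact absurd rfl huv.ne
        obtain ⟨z, hz⟩ := hne2
        have hzs : z ∈ p.support := (hsup z).mpr (Or.inl hz)
        rcases edge_endpoints_support hp hedgeab z hzs with rfl | rfl
        · exact (hnT2 _ hz).1 rfl
        · exact (hnT2 _ hz).2 rfl
      refine Or.inr (mkInduced (liftWalk K u v p) (liftWalk_isPath hp) ?_ ?_)
      · intro z
        cases z with
        | none =>
          refine iff_of_false (fun h => huve ((liftWalk_none_mem_support p).mp h)) ?_
          rintro (h | h | h)
          · exact Set.disjoint_left.mp hdisj hw h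
          · simp at h
          · simp at h
        | some z' =>
          rw [liftWalk_mem_support_some, hsup z']
          exact (memtr2 z').symm
      · intro x y hx hy hadj
        have hxn : ∀ z ∈ T2 ∪ {some a', some b'}, z ≠ (none : Option V) := by
          rintro z (h | h | h)
          · exact fun hc => Set.disjoint_left.mp hdisj hw (hc ▸ h)
          · exact fun hc => by rw [h] at hc; simp at hc
          · exact fun hc => by rw [h] at hc; simp at hc
        cases x with
        | none => exact absurd rfl (hxn _ hx)
        | some x' =>
          cases y with
          | none => exact absurd rfl (hxn _ hy)
          | some y' =>
            obtain ⟨hk, hne⟩ := sub_adj_some_some.mp hadj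
            exact (liftWalk_edge_some_some p).mpr
              ⟨(hedge x' y' ((memtr2 x').mp hx) ((memtr2 y').mp hy)).mp hk, hne⟩
  · -- degenerate: T1 = {none}
    have hT1 : ∀ z ∈ T1, z = (none : Option V) := by
      intro z hz
      cases z with
      | none => rfl
      | some z' => exact absurd ⟨z', hz⟩ hS1e
    have hu2 : u = a' ∨ u = b' := by
      rcases hu' with h | h
      · exact absurd (hT1 _ h) (by simp)
      · exact h
    have hv2 : v = a' ∨ v = b' := by
      rcases hv' with h | h
      · exact absurd (hT1 _ h) (by simp)
      · exact h
    have hseteq : T1 ∪ {some a', some b'} = {some a', (none : Option V), some b'} := by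
      ext z
      constructor
      · rintro (hz | hz | hz)
        · exact Or.inr (Or.inl (hT1 _ hz))
        · exact Or.inl hz
        · exact Or.inr (Or.inr hz)
      · rintro (rfl | rfl | rfl)
        · exact Or.inr (Or.inl rfl)
        · exact Or.inl hw
        · exact Or.inr (Or.inr rfl)
    rw [hseteq]
    rcases hu2 with rfl | rfl
    · -- u = a'; hence v = b'
      rcases hv2 with heq | rfl
      · exact absurd heq huv.ne'
      · refine Or.inl (inducedIsPath_two (sub_adj_some_none (Or.inl rfl))
          (sub_adj_none_some (Or.inr rfl)) hab ?_)
        intro hadj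
        exact (sub_adj_some_some.mp hadj).2 rfl
    · -- u = b'; hence v = a'
      rcases hv2 with rfl | heq
      · refine Or.inl (inducedIsPath_two (sub_adj_some_none (Or.inr rfl))
          (sub_adj_none_some (Or.inl rfl)) hab ?_)
        intro hadj
        exact (sub_adj_some_some.mp hadj).2 Sym2.eq_swap
      · exact absurd heq.symm huv.ne
end Monster3

section Final
variable {V : Type} {K : SimpleGraph V} {u v : V}

lemma sepProp_sub (huv : K.Adj u v) (hK : GoodG K) : SepProp (SubdivideEdge K u v) := by
  intro a b hab T1 T2 hpart hdisj h1 h2 hsep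
  by_cases hna : none = a
  · subst hna
    exact sepB huv hK hab hpart hdisj h1 h2 hsep
  by_cases hnb : none = b
  · subst hnb
    have hpart2 : T1 ∪ T2 = {z : Option V | z ≠ none ∧ z ≠ a} := by
      rw [hpart]; ext z; simp only [Set.mem_setOf_eq]; exact and_comm
    have hres := sepB huv hK (Ne.symm hab) hpart2 hdisj h1 h2 hsep
    rcases hres with h | h
    · rw [Set.pair_comm (none : Option V) a] at h
      exact Or.inl h.symm'
    · rw [Set.pair_comm (none : Option V) a] at h
      exact Or.inr h.symm'
  have hw : (none : Option V) ∈ T1 ∪ T2 := by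
    rw [hpart]
    exact ⟨hna, hnb⟩
  rcases hw with hw | hw
  · exact sepA huv hK hab hpart hdisj h2 hsep hw
  · have := sepA huv hK hab (T1 := T2) (T2 := T1)
      (by rw [Set.union_comm]; exact hpart) hdisj.symm h1
      (fun x hx y hy h => hsep y hy x hx h.symm) hw
    exact this.symm

lemma goodG_sub (huv : K.Adj u v) (hK : GoodG K) : GoodG (SubdivideEdge K u v) :=
  ⟨minDeg2_sub huv hK.1, noSep1_sub huv hK.1 hK.2.1, sepProp_sub huv hK⟩

end Final

lemma goodG_of_subdivision {V : Type} {G : SimpleGraph V} {W : Type} {H : SimpleGraph W}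
    (h : IsSubdivisionOf G H) : GoodG H → GoodG G := by
  induction h with
  | iso e => exact goodG_iso e
  | step u v hadj hs ih => exact fun hH => ih (goodG_sub hadj hH)


end AuxProof

/-- If `G` is homeomorphic to `K₅` or `K₃,₃` with cut set `{a, b}` and
`G - a,b = G₁ ⊔ G₂`, then one of the induced subgraphs on `V(G₁) ∪ {a,b}` and
`V(G₂) ∪ {a,b}` is an `a`-`b`-path. -/
theorem stmt_16 {V : Type} [Fintype V] (G : SimpleGraph V)
    (hK : IsSubdivisionOf G K5 ∨ IsSubdivisionOf G K33)
    (a b : V) (hab : a ≠ b) (S1 S2 : Set V)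
    (hpart : S1 ∪ S2 = {v | v ≠ a ∧ v ≠ b}) (hdisj : Disjoint S1 S2)
    (h1 : S1.Nonempty) (h2 : S2.Nonempty)
    (hsep : ∀ x ∈ S1, ∀ y ∈ S2, ¬ G.Adj x y) :
    InducedIsPath G (S1 ∪ {a, b}) a b ∨ InducedIsPath G (S2 ∪ {a, b}) a b := by
  have hG : GoodG G := by
    rcases hK with h | h
    · exact goodG_of_subdivision h inv_K5
    · exact goodG_of_subdivision h inv_K33
  exact hG.2.2 a b hab S1 S2 hpart hdisj h1 h2 hsep
end
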